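/- arXiv:2604.03194 — 11 statements merged into one kernel-verified Lean document; each statement's English description precedes it below -/
import Mathlib

section
/- Let n and k be positive integers, let M be an n×n complex matrix, let f : Fin n → Fin k be a surjective map with characteristic matrix P defined by P i j = 1 if f i = j and 0 otherwise, and let Q be a k×k complex matrix such that M * P = P * Q. Then every eigenvalue of Q is an eigenvalue of M, that is, spectrum ℂ Q ⊆ spectrum ℂ M. -/
/-- Every eigenvalue of an equitable quotient matrix `Q` of a complex matrix `M`
is an eigenvalue of `M`. -/
theorem quotient_spectrum_subset (n k : ℕ) (hn : 0 < n) (hk : 0 < k)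
    (M : Matrix (Fin n) (Fin n) ℂ)
    (f : Fin n → Fin k) (hf : Function.Surjective f)
    (P : Matrix (Fin n) (Fin k) ℂ)
    (hP : ∀ i j, P i j = if f i = j then 1 else 0)
    (Q : Matrix (Fin k) (Fin k) ℂ)
    (hQ : M * P = P * Q) :
    spectrum ℂ Q ⊆ spectrum ℂ M := by
  intro μ hμ
  rw [spectrum.mem_iff] at hμ ⊢
  rw [Matrix.isUnit_iff_isUnit_det, isUnit_iff_ne_zero, not_not,
    ← Matrix.exists_mulVec_eq_zero_iff] at hμ ⊢
  obtain ⟨v, hv, hvQ⟩ := hμ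
  have halg : ∀ (m : ℕ) (w : Fin m → ℂ),
      (algebraMap ℂ (Matrix (Fin m) (Fin m) ℂ) μ).mulVec w = μ • w := by
    intro m w
    rw [Algebra.algebraMap_eq_smul_one, Matrix.smul_mulVec, Matrix.one_mulVec]
  have hQv : Q.mulVec v = μ • v := by
    have h0 : (algebraMap ℂ (Matrix (Fin k) (Fin k) ℂ) μ).mulVec v - Q.mulVec v = 0 := by
      rw [← Matrix.sub_mulVec, hvQ]
    rw [halg k v] at h0
    exact (sub_eq_zero.mp h0).symm
  -- P v is nonzero
  have hPv : ∀ i, P.mulVec v i = v (f i) := by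
    intro i
    simp only [Matrix.mulVec, dotProduct, hP]
    simp
  obtain ⟨j, hj⟩ := Function.ne_iff.mp hv
  obtain ⟨i, hi⟩ := hf j
  have hPvne : P.mulVec v ≠ 0 := by
    intro h
    apply hj
    have := congrFun h i
    rwa [hPv, hi] at this
  refine ⟨P.mulVec v, hPvne, ?_⟩
  have hMPv : (algebraMap ℂ (Matrix (Fin n) (Fin n) ℂ) μ - M).mulVec (P.mulVec v)
      = μ • P.mulVec v - M.mulVec (P.mulVec v) := by
    rw [Matrix.sub_mulVec, halg n]
  rw [hMPv, Matrix.mulVec_mulVec, hQ, ← Matrix.mulVec_mulVec, hQv,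
    Matrix.mulVec_smul, sub_self]
end

section
/- Let n and k be positive integers, let M be an n×n real matrix all of whose entries are nonnegative, let f : Fin n → Fin k be a surjective map with characteristic matrix P defined by P i j = 1 if f i = j and 0 otherwise, and let Q be a k×k real matrix such that M * P = P * Q. Then the spectral radius of M equals the spectral radius of Q, i.e., spectralRadius ℂ (M.map Complex.ofReal) = spectralRadius ℂ (Q.map Complex.ofReal). -/
attribute [local instance] Matrix.linftyOpNormedRing Matrix.linftyOpNormedAlgebra

/-- A nonnegative real matrix and any of its equitable quotient matrices have the
same spectral radius. -/
theorem spectralRadius_eq_of_equitable (n k : ℕ) (hn : 0 < n) (hk : 0 < k)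
    (M : Matrix (Fin n) (Fin n) ℝ) (hM : ∀ i j, 0 ≤ M i j)
    (f : Fin n → Fin k) (hf : Function.Surjective f)
    (P : Matrix (Fin n) (Fin k) ℝ)
    (hP : ∀ i j, P i j = if f i = j then 1 else 0)
    (Q : Matrix (Fin k) (Fin k) ℝ)
    (hQ : M * P = P * Q) :
    spectralRadius ℂ (M.map Complex.ofReal) = spectralRadius ℂ (Q.map Complex.ofReal) := by
  classical
  -- (P * A) i j = A (f i) j for any k×k matrix A
  have hPA : ∀ (A : Matrix (Fin k) (Fin k) ℝ) (i : Fin n) (j : Fin k),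
      (P * A) i j = A (f i) j := by
    intro A i j
    simp only [Matrix.mul_apply, hP]
    rw [Finset.sum_eq_single (f i)]
    · simp
    · intro b _ hb; simp [Ne.symm hb]
    · simp
  -- Q is entrywise nonnegative
  have hQnn : ∀ c j, 0 ≤ Q c j := by
    intro c j
    obtain ⟨i, hi⟩ := hf c
    have : Q (f i) j = (M * P) i j := by rw [hQ, hPA]
    rw [← hi, this, Matrix.mul_apply]
    apply Finset.sum_nonneg
    intro l _
    rw [hP]
    split <;> simp [hM i l]
  -- powers commute with P
  have hpow : ∀ m : ℕ, M ^ m * P = P * Q ^ m := by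
    intro m
    induction m with
    | zero => simp
    | succ m ih =>
        rw [pow_succ, pow_succ, Matrix.mul_assoc, hQ, ← Matrix.mul_assoc, ih,
          Matrix.mul_assoc]
  -- nonnegativity of entries of powers
  have hMpow : ∀ m i j, 0 ≤ (M ^ m) i j := by
    intro m
    induction m with
    | zero => intro i j; simp [Matrix.one_apply]; split <;> norm_num
    | succ m ih =>
        intro i j
        rw [pow_succ, Matrix.mul_apply]
        exact Finset.sum_nonneg fun l _ => mul_nonneg (ih i l) (hM l j)
  have hQpow : ∀ m c j, 0 ≤ (Q ^ m) c j := by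
    intro m
    induction m with
    | zero => intro c j; simp [Matrix.one_apply]; split <;> norm_num
    | succ m ih =>
        intro c j
        rw [pow_succ, Matrix.mul_apply]
        exact Finset.sum_nonneg fun l _ => mul_nonneg (ih c l) (hQnn l j)
  -- row sums agree
  have hrow : ∀ (m : ℕ) (i : Fin n),
      ∑ j, (Q ^ m) (f i) j = ∑ l, (M ^ m) i l := by
    intro m i
    have h1 : ∑ j, (P * Q ^ m) i j = ∑ j, (Q ^ m) (f i) j := by
      simp only [hPA]
    have h2 : ∑ j, (M ^ m * P) i j = ∑ l, (M ^ m) i l := by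
      simp only [Matrix.mul_apply]
      rw [Finset.sum_comm]
      refine Finset.sum_congr rfl fun l _ => ?_
      simp [hP, ← Finset.mul_sum]
    rw [← h1, ← hpow m, h2]
  -- nnnorms of powers agree
  have hnorm : ∀ m : ℕ,
      ‖(M.map Complex.ofReal) ^ m‖₊ = ‖(Q.map Complex.ofReal) ^ m‖₊ := by
    intro m
    have hMm : (M.map Complex.ofReal) ^ m = (M ^ m).map Complex.ofReal := by
      have := map_pow (Complex.ofRealHom.mapMatrix) M m
      exact this.symm
    have hQm : (Q.map Complex.ofReal) ^ m = (Q ^ m).map Complex.ofReal := by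
      have := map_pow (Complex.ofRealHom.mapMatrix) Q m
      exact this.symm
    rw [hMm, hQm, Matrix.linfty_opNNNorm_def, Matrix.linfty_opNNNorm_def]
    have key : ∀ i : Fin n,
        (∑ l, ‖((M ^ m).map Complex.ofReal) i l‖₊)
          = ∑ j, ‖((Q ^ m).map Complex.ofReal) (f i) j‖₊ := by
      intro i
      apply NNReal.coe_injective
      push_cast
      simp only [Matrix.map_apply, Complex.nnnorm_real, Complex.norm_real, coe_nnnorm,
        Real.norm_eq_abs, abs_of_nonneg (hMpow m i _), abs_of_nonneg (hQpow m (f i) _)]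
      exact (hrow m i).symm
    apply le_antisymm
    · refine Finset.sup_le fun i _ => le_trans (le_of_eq (key i)) ?_
      exact Finset.le_sup (f := fun c => ∑ j, ‖((Q ^ m).map Complex.ofReal) c j‖₊)
        (Finset.mem_univ (f i))
    · refine Finset.sup_le fun c _ => ?_
      obtain ⟨i, rfl⟩ := hf c
      refine le_trans (le_of_eq (key i).symm) ?_
      exact Finset.le_sup (f := fun i => ∑ l, ‖((M ^ m).map Complex.ofReal) i l‖₊)
        (Finset.mem_univ i)
  -- Gelfand's formula on both sides
  have h1 := spectrum.pow_nnnorm_pow_one_div_tendsto_nhds_spectralRadius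
    (M.map Complex.ofReal)
  have h2 := spectrum.pow_nnnorm_pow_one_div_tendsto_nhds_spectralRadius
    (Q.map Complex.ofReal)
  have h2' : Filter.Tendsto
      (fun m : ℕ => (‖(M.map Complex.ofReal) ^ m‖₊ : ENNReal) ^ (1 / m : ℝ))
      Filter.atTop (nhds (spectralRadius ℂ (Q.map Complex.ofReal))) := by
    refine h2.congr fun m => ?_
    rw [hnorm m]
  exact tendsto_nhds_unique h1 h2'
end

section
/- Let M = !![10,-1,-1,-4; -1,10,-1,-4; 6,6,-14,1; 6,6,1,-14] be the 4×4 real matrix above, let P = !![1,0; 1,0; 0,1; 0,1] be the characteristic matrix of the partition {{1,2},{3,4}}, and let Q = !![9,-5; 12,-13]. Then M * P = P * Q (so the partition is equitable with quotient Q), the number 11 is an eigenvalue of M, i.e., (11 : ℂ) ∈ spectrum ℂ (M.map Complex.ofReal), yet every λ ∈ spectrum ℂ (Q.map Complex.ofReal) satisfies ‖λ‖ < 11. In particular, a matrix with negative entries and its equitable quotient matrix need not share the same spectral radius. -/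
/-- A matrix with negative entries and its equitable quotient matrix need not share
the same spectral radius: here `11` is an eigenvalue of `M`, but every eigenvalue of
the equitable quotient `Q` has norm strictly less than `11`. -/
theorem counterexample_spectral_radius
    (M : Matrix (Fin 4) (Fin 4) ℝ)
    (hM : M = !![10, -1, -1, -4; -1, 10, -1, -4; 6, 6, -14, 1; 6, 6, 1, -14])
    (P : Matrix (Fin 4) (Fin 2) ℝ)
    (hP : P = !![1, 0; 1, 0; 0, 1; 0, 1])
    (Q : Matrix (Fin 2) (Fin 2) ℝ)
    (hQ : Q = !![9, -5; 12, -13]) :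
    M * P = P * Q ∧
      (11 : ℂ) ∈ spectrum ℂ (M.map Complex.ofReal) ∧
      ∀ μ ∈ spectrum ℂ (Q.map Complex.ofReal), ‖μ‖ < 11 := by
  subst hM hP hQ
  refine ⟨?_, ?_, ?_⟩
  · ext i j
    fin_cases i <;> fin_cases j <;>
      simp [Matrix.mul_apply, Fin.sum_univ_succ, Matrix.vecHead, Matrix.vecTail] <;> norm_num
  · rw [spectrum.mem_iff]
    intro h
    rw [Matrix.isUnit_iff_isUnit_det, isUnit_iff_ne_zero] at h
    apply h
    apply Matrix.det_zero_of_row_eq (show (0 : Fin 4) ≠ 1 by decide)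
    funext j
    fin_cases j <;>
      simp [Matrix.algebraMap_matrix_apply, Matrix.map_apply, Matrix.vecHead,
        Matrix.vecTail] <;> norm_num
  · intro μ hμ
    rw [spectrum.mem_iff] at hμ
    rw [Matrix.isUnit_iff_isUnit_det, isUnit_iff_ne_zero, not_not] at hμ
    have hdet : (algebraMap ℂ (Matrix (Fin 2) (Fin 2) ℂ) μ -
        (!![9, -5; 12, -13] : Matrix (Fin 2) (Fin 2) ℝ).map Complex.ofReal) =
        !![μ - 9, 5; -12, μ + 13] := by
      ext i j
      fin_cases i <;> fin_cases j <;>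
        simp [Matrix.algebraMap_matrix_apply, Matrix.map_apply, Matrix.vecHead,
          Matrix.vecTail]
    rw [hdet, Matrix.det_fin_two_of] at hμ
    have hsq : (μ + 2) ^ 2 = 61 := by linear_combination hμ
    set s : ℝ := Real.sqrt 61 with hs
    have hs2 : (s : ℂ) ^ 2 = 61 := by
      rw [← Complex.ofReal_pow, Real.sq_sqrt (by norm_num : (0:ℝ) ≤ 61)]
      norm_num
    have hfac : (μ + 2 - s) * (μ + 2 + s) = 0 := by linear_combination hsq - hs2
    have hslt : s < 9 := by
      rw [hs, show (9:ℝ) = Real.sqrt 81 by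
        rw [show (81:ℝ) = 9^2 by norm_num, Real.sqrt_sq (by norm_num : (0:ℝ) ≤ 9)]]
      exact Real.sqrt_lt_sqrt (by norm_num) (by norm_num)
    have hs0 : 0 ≤ s := Real.sqrt_nonneg _
    rcases mul_eq_zero.mp hfac with h | h
    · have hμeq : μ = ((s - 2 : ℝ) : ℂ) := by push_cast; linear_combination h
      rw [hμeq, Complex.norm_real, Real.norm_eq_abs, abs_lt]
      constructor <;> linarith
    · have hμeq : μ = ((-s - 2 : ℝ) : ℂ) := by push_cast; linear_combination h
      rw [hμeq, Complex.norm_real, Real.norm_eq_abs, abs_lt]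
      constructor <;> linarith
end

section
/- Let n ≥ 1 and let M be the (n+2)×(n+2) complex matrix with indices 0,…,n+1 defined by: M 0 0 = 4n−2, M 0 1 = −(2n−2), and M 0 j = −2 for 2 ≤ j ≤ n+1; M 1 0 = −1, M 1 1 = 4n+1, and M 1 j = −4 for 2 ≤ j ≤ n+1; and for 2 ≤ i ≤ n+1: M i 0 = −1, M i 1 = −2(2n−2), M i i = 8n−7, and M i j = −4 for 2 ≤ j ≤ n+1 with j ≠ i. Let P be the characteristic matrix of the partition {{0},{1},{2,…,n+1}} and let Q = !![4n−2, −(2n−2), −2n; −1, 4n+1, −4n; −1, −2(2n−2), 4n−3]. Then M * P = P * Q, and the set of eigenvalues of M equals the set of eigenvalues of Q: spectrum ℂ M = spectrum ℂ Q. Thus the equitable quotient matrix Q of order 3 contains all the distinct eigenvalues of M. -/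
open Matrix

private lemma memSpec {m : Type*} [Fintype m] [DecidableEq m] (A : Matrix m m ℂ) (μ : ℂ) :
    μ ∈ spectrum ℂ A ↔ ∃ v, v ≠ 0 ∧ A.mulVec v = μ • v := by
  rw [spectrum.mem_iff, Matrix.isUnit_iff_isUnit_det, isUnit_iff_ne_zero, not_not,
    ← Matrix.exists_mulVec_eq_zero_iff]
  refine exists_congr fun v => and_congr_right fun hv => ?_
  rw [Matrix.sub_mulVec, Algebra.algebraMap_eq_smul_one, Matrix.smul_mulVec,
    Matrix.one_mulVec, sub_eq_zero, eq_comm]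

private lemma zeroMemSpec {m : Type*} [Fintype m] [DecidableEq m] (A : Matrix m m ℂ)
    (u : m → ℂ) (hu : u ≠ 0) (h : u ᵥ* A = 0) : 0 ∈ spectrum ℂ A := by
  rw [spectrum.zero_mem_iff, Matrix.isUnit_iff_isUnit_det, isUnit_iff_ne_zero, not_not,
    ← Matrix.exists_vecMul_eq_zero_iff]
  exact ⟨u, hu, h⟩

private lemma shiftSpec {m : Type*} [Fintype m] [DecidableEq m] (A : Matrix m m ℂ) (c μ : ℂ) :
    μ ∈ spectrum ℂ (c • (1 : Matrix m m ℂ) + A) ↔ μ - c ∈ spectrum ℂ A := by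
  rw [spectrum.mem_iff, spectrum.mem_iff]
  have : algebraMap ℂ (Matrix m m ℂ) μ - (c • 1 + A)
      = algebraMap ℂ (Matrix m m ℂ) (μ - c) - A := by
    simp only [Algebra.algebraMap_eq_smul_one, sub_smul]
    abel
  rw [this]

private lemma specMulCommAux {m k : Type*} [Fintype m] [DecidableEq m] [Fintype k] [DecidableEq k]
    (A : Matrix m k ℂ) (B : Matrix k m ℂ) (μ : ℂ) (hμ : μ ≠ 0)
    (h : μ ∈ spectrum ℂ (A * B)) : μ ∈ spectrum ℂ (B * A) := by
  rw [memSpec] at h ⊢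
  obtain ⟨v, hv, he⟩ := h
  refine ⟨B.mulVec v, ?_, ?_⟩
  · intro h0
    apply hv
    have : (A * B).mulVec v = 0 := by rw [← Matrix.mulVec_mulVec, h0, Matrix.mulVec_zero]
    rw [he] at this
    simpa [hμ] using this
  · rw [← Matrix.mulVec_mulVec, Matrix.mulVec_mulVec v A B, he, Matrix.mulVec_smul]

private lemma specMulComm {m k : Type*} [Fintype m] [DecidableEq m] [Fintype k] [DecidableEq k]
    (A : Matrix m k ℂ) (B : Matrix k m ℂ) (μ : ℂ) (hμ : μ ≠ 0) :
    μ ∈ spectrum ℂ (A * B) ↔ μ ∈ spectrum ℂ (B * A) :=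
  ⟨specMulCommAux A B μ hμ, specMulCommAux B A μ hμ⟩

/-- cell-index map for the partition `{{0},{1},{2,…,n+1}}`. -/
private def cl (n : ℕ) (i : Fin (n + 2)) : Fin 3 :=
  if i.val = 0 then 0 else if i.val = 1 then 1 else 2

/-- The inner 3×3 matrix `S` with `M = (8n-3)•1 + P S Pᵀ`. -/
private def Sm (n : ℕ) : Matrix (Fin 3) (Fin 3) ℂ :=
  !![1 - 4 * (n : ℂ), -(2 * (n : ℂ) - 2), -2;
     -1, 4 - 4 * (n : ℂ), -4;
     -1, -(4 * (n : ℂ) - 4), -4]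

/-- The diagonal matrix `D = Pᵀ P` of cell sizes. -/
private def Dm (n : ℕ) : Matrix (Fin 3) (Fin 3) ℂ :=
  !![1, 0, 0; 0, 1, 0; 0, 0, (n : ℂ)]

private lemma Sm00 (n : ℕ) : Sm n 0 0 = 1 - 4 * (n : ℂ) := rfl
private lemma Sm01 (n : ℕ) : Sm n 0 1 = -(2 * (n : ℂ) - 2) := rfl
private lemma Sm02 (n : ℕ) : Sm n 0 2 = -2 := rfl
private lemma Sm10 (n : ℕ) : Sm n 1 0 = -1 := rfl
private lemma Sm11 (n : ℕ) : Sm n 1 1 = 4 - 4 * (n : ℂ) := rfl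
private lemma Sm12 (n : ℕ) : Sm n 1 2 = -4 := rfl
private lemma Sm20 (n : ℕ) : Sm n 2 0 = -1 := rfl
private lemma Sm21 (n : ℕ) : Sm n 2 1 = -(4 * (n : ℂ) - 4) := rfl
private lemma Sm22 (n : ℕ) : Sm n 2 2 = -4 := rfl

/-- The `(n+2) × (n+2)` matrix `M` from Proposition 2.5 has an equitable quotient
matrix `Q` of order 3 (for the partition `{{0},{1},{2,…,n+1}}`) whose spectrum
equals the spectrum of `M`; i.e. `Q` contains all the distinct eigenvalues of `M`. -/
theorem quotient_contains_all_eigenvalues_special (n : ℕ) (hn : 1 ≤ n)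
    (M : Matrix (Fin (n + 2)) (Fin (n + 2)) ℂ)
    (hM : ∀ i j : Fin (n + 2), M i j =
      if i.val = 0 then
        (if j.val = 0 then 4 * (n : ℂ) - 2
         else if j.val = 1 then -(2 * (n : ℂ) - 2) else -2)
      else if i.val = 1 then
        (if j.val = 0 then -1 else if j.val = 1 then 4 * (n : ℂ) + 1 else -4)
      else
        (if j.val = 0 then -1
         else if j.val = 1 then -2 * (2 * (n : ℂ) - 2)
         else if j = i then 8 * (n : ℂ) - 7 else -4))
    (P : Matrix (Fin (n + 2)) (Fin 3) ℂ)
    (hP : ∀ i j, P i j =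
      if (if i.val = 0 then (0 : ℕ) else if i.val = 1 then 1 else 2) = j.val then 1 else 0)
    (Q : Matrix (Fin 3) (Fin 3) ℂ)
    (hQ : Q = !![4 * (n : ℂ) - 2, -(2 * (n : ℂ) - 2), -2 * (n : ℂ);
                 -1, 4 * (n : ℂ) + 1, -4 * (n : ℂ);
                 -1, -2 * (2 * (n : ℂ) - 2), 4 * (n : ℂ) - 3]) :
    M * P = P * Q ∧ spectrum ℂ M = spectrum ℂ Q := by
  -- notation
  have hPe : ∀ i l, P i l = if cl n i = l then 1 else 0 := by
    intro i l
    rw [hP]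
    refine if_congr ?_ rfl rfl
    unfold cl
    by_cases h0 : i.val = 0
    · simp [h0, Fin.ext_iff]
    · by_cases h1 : i.val = 1 <;> simp [h0, h1, Fin.ext_iff]
  have hPS : ∀ i l, (P * Sm n) i l = Sm n (cl n i) l := by
    intro i l
    rw [Matrix.mul_apply]
    simp only [hPe, ite_mul, one_mul, zero_mul]
    rw [Finset.sum_ite_eq]
    simp
  have hA : ∀ i k, (P * Sm n * Pᵀ) i k = Sm n (cl n i) (cl n k) := by
    intro i k
    rw [Matrix.mul_apply]
    simp only [Matrix.transpose_apply, hPS, hPe, mul_ite, mul_one, mul_zero]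
    rw [Finset.sum_ite_eq]
    simp
  -- the structural decomposition of M
  have hMeq : M = (8 * (n : ℂ) - 3) • (1 : Matrix (Fin (n + 2)) (Fin (n + 2)) ℂ)
      + P * Sm n * Pᵀ := by
    ext i k
    rw [Matrix.add_apply, Matrix.smul_apply, Matrix.one_apply, hA, hM]
    by_cases hi0 : i.val = 0
    · by_cases hk0 : k.val = 0
      · have hik : i = k := Fin.ext (by omega)
        subst hik
        simp [cl, hi0, Sm00]
        ring
      · have hik : ¬ i = k := fun h => hk0 (h ▸ hi0)
        by_cases hk1 : k.val = 1
        · simp [cl, hi0, hk0, hk1, hik, Sm01]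
        · simp [cl, hi0, hk0, hk1, hik, Sm02]
    · by_cases hi1 : i.val = 1
      · by_cases hk0 : k.val = 0
        · have hik : ¬ i = k := fun h => hi0 (h ▸ hk0 ▸ rfl)
          simp [cl, hi0, hi1, hk0, hik, Sm10]
        · by_cases hk1 : k.val = 1
          · have hik : i = k := Fin.ext (by omega)
            subst hik
            simp [cl, hi0, hi1, Sm11]
            ring
          · have hik : ¬ i = k := fun h => hk1 (h ▸ hi1)
            simp [cl, hi0, hi1, hk0, hk1, hik, Sm12]
      · by_cases hk0 : k.val = 0
        · have hik : ¬ i = k := fun h => hi0 (h ▸ hk0 ▸ rfl)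
          simp [cl, hi0, hi1, hk0, hik, Sm20]
        · by_cases hk1 : k.val = 1
          · have hik : ¬ i = k := fun h => hi1 (h ▸ hk1 ▸ rfl)
            simp [cl, hi0, hi1, hk0, hk1, hik, Sm21]
            ring
          · by_cases hik : k = i
            · subst hik
              simp [cl, hi0, hi1, Sm22]
              ring
            · have hik2 : ¬ i = k := fun h => hik h.symm
              simp [cl, hi0, hi1, hk0, hk1, hik, hik2, Sm22]
  -- Pᵀ P is the diagonal matrix of cell sizes
  have hD : Pᵀ * P = Dm n := by
    ext l l'
    rw [Matrix.mul_apply]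
    simp only [Matrix.transpose_apply, hPe]
    rw [Fin.sum_univ_succ, Fin.sum_univ_succ]
    have h0 : cl n 0 = 0 := by simp [cl]
    have h1 : cl n ((0 : Fin (n + 1)).succ) = 1 := by simp [cl]
    have h2 : ∀ j : Fin n, cl n j.succ.succ = 2 := by
      intro j
      simp [cl, Fin.val_succ]
    rw [h0, h1]
    simp only [h2]
    fin_cases l <;> fin_cases l' <;>
      simp [Dm, Matrix.vecHead, Matrix.vecTail, Finset.sum_const, Fintype.card_fin]
  -- the structural decomposition of Q
  have hQe : Q = (8 * (n : ℂ) - 3) • (1 : Matrix (Fin 3) (Fin 3) ℂ) + Sm n * Dm n := by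
    rw [hQ]
    ext i j
    fin_cases i <;> fin_cases j <;>
      simp [Sm, Dm, Matrix.vecHead, Matrix.vecTail, Matrix.mul_apply, Fin.sum_univ_three, Matrix.one_apply] <;> ring_nf
  -- equitable partition: M P = P Q
  have hassoc : P * Sm n * Pᵀ * P = P * (Sm n * Dm n) := by
    rw [Matrix.mul_assoc (P * Sm n), hD, Matrix.mul_assoc]
  have hMP : M * P = P * Q := by
    rw [hMeq, hQe, Matrix.add_mul, Matrix.mul_add, hassoc, Matrix.smul_mul,
      Matrix.one_mul, Matrix.mul_smul, Matrix.mul_one]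
  refine ⟨hMP, ?_⟩
  -- 0 is in both spectra
  have hu0 : (0 : ℂ) ∈ spectrum ℂ (P * Sm n * Pᵀ) := by
    refine zeroMemSpec _ (fun i => if i.val = 1 then 1 else if i.val = 2 then -1 else 0) ?_ ?_
    · intro h
      have := congrFun h ⟨1, by omega⟩
      norm_num at this
    · ext k
      simp only [Matrix.vecMul, dotProduct, Pi.zero_apply]
      have hv1 : ((1 : Fin (n + 2))).val = 1 := rfl
      have hv2 : ((⟨2, by omega⟩ : Fin (n + 2))).val = 2 := rfl
      have key : ∀ i : Fin (n + 2),
          (if i.val = 1 then (1 : ℂ) else if i.val = 2 then -1 else 0)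
              * (P * Sm n * Pᵀ) i k
          = (if (1 : Fin (n + 2)) = i then Sm n 1 (cl n k) else 0)
            + (if (⟨2, by omega⟩ : Fin (n + 2)) = i then -(Sm n 2 (cl n k)) else 0) := by
        intro i
        rw [hA]
        by_cases h1 : i.val = 1
        · have e1 : (1 : Fin (n + 2)) = i := Fin.ext (by rw [hv1, h1])
          have e2 : (⟨2, by omega⟩ : Fin (n + 2)) ≠ i := fun h => by
            rw [← h, hv2] at h1; simp at h1
          have ecl : cl n i = 1 := by simp [cl, h1]
          simp [h1, e1, e2, ecl]
        · by_cases h2 : i.val = 2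
          · have e1 : (1 : Fin (n + 2)) ≠ i := fun h => by
              rw [← h, hv1] at h2; simp at h2
            have e2 : (⟨2, by omega⟩ : Fin (n + 2)) = i := Fin.ext (by rw [hv2, h2])
            have ecl : cl n i = 2 := by simp [cl, h1, h2]
            simp [h1, h2, e1, e2, ecl]
          · have e1 : (1 : Fin (n + 2)) ≠ i := fun h => by
              rw [← h, hv1] at h1; simp at h1
            have e2 : (⟨2, by omega⟩ : Fin (n + 2)) ≠ i := fun h => by
              rw [← h, hv2] at h2; simp at h2
            simp [h1, h2, e1, e2]
      rw [Finset.sum_congr rfl fun i _ => key i, Finset.sum_add_distrib, Finset.sum_ite_eq,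
        Finset.sum_ite_eq]
      have hrow : Sm n 1 (cl n k) = Sm n 2 (cl n k) := by
        generalize cl n k = x
        fin_cases x <;> simp [Sm, Matrix.vecHead, Matrix.vecTail] <;> ring_nf
      simp [hrow]
  have hw0 : (0 : ℂ) ∈ spectrum ℂ (Sm n * Dm n) := by
    refine zeroMemSpec _ ![0, 1, -1] ?_ ?_
    · intro h
      have := congrFun h 1
      norm_num at this
    · have hS : ![(0 : ℂ), 1, -1] ᵥ* Sm n = 0 := by
        ext l
        fin_cases l <;>
          simp [Matrix.vecMul, dotProduct, Fin.sum_univ_three, Sm,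
            Matrix.vecHead, Matrix.vecTail] <;> ring_nf
      rw [← Matrix.vecMul_vecMul, hS, Matrix.zero_vecMul]
  -- spectra agree
  rw [hMeq, hQe]
  ext μ
  rw [shiftSpec, shiftSpec]
  by_cases h : μ - (8 * (n : ℂ) - 3) = 0
  · rw [h]
    exact ⟨fun _ => hw0, fun _ => hu0⟩
  · have e1 : P * Sm n * Pᵀ = P * (Sm n * Pᵀ) := Matrix.mul_assoc _ _ _
    have e2 : Sm n * Pᵀ * P = Sm n * Dm n := by rw [Matrix.mul_assoc, hD]
    rw [e1, specMulComm _ _ _ h, e2]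
end

section
/- Let n ≥ 2 and let M be the n×n complex matrix with indices 0,…,n−1 defined by: M 0 0 = 1, M 0 j = −2 for j ≥ 1, M i 0 = 2 for i ≥ 1, M i i = 5 for i ≥ 1, and M i j = 2 for i, j ≥ 1 with i ≠ j (i.e., M = fromBlocks with (1,1)-block the 1×1 matrix (1), upper-right block −2·(all-ones row), lower-left block 2·(all-ones column), and lower-right block 5·I + 2·(J − I) of order n−1). Let P be the characteristic matrix of the partition {{0},{1,…,n−1}} and Q = !![1, −2(n−1); 2, 2n+1]. Then M * P = P * Q, the characteristic polynomial of M is M.charpoly = (X − C 3)^(n−1) * (X − C (2n−1)), and spectrum ℂ M = spectrum ℂ Q = {3, 2n−1}. Thus the smallest equitable quotient matrix Q contains all the distinct eigenvalues of M. -/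
open Polynomial
open Matrix

/-- Determinant of a scalar matrix plus a rank-one matrix, over a field. -/
lemma aux_det_rank_one {K : Type*} [Field K] {m : ℕ} (hm : 1 ≤ m) (a : K) (ha : a ≠ 0)
    (u v : Fin m → K) :
    Matrix.det (a • (1 : Matrix (Fin m) (Fin m) K) + Matrix.replicateCol (Fin 1) u * Matrix.replicateRow (Fin 1) v)
      = a ^ (m - 1) * (a + v ⬝ᵥ u) := by
  have h1 : a • (1 : Matrix (Fin m) (Fin m) K) + Matrix.replicateCol (Fin 1) u * Matrix.replicateRow (Fin 1) v
      = a • ((1 : Matrix (Fin m) (Fin m) K)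
          + Matrix.replicateCol (Fin 1) (a⁻¹ • u) * Matrix.replicateRow (Fin 1) v) := by
    ext i j
    simp [Matrix.mul_apply, Matrix.one_apply, mul_comm, mul_assoc]
    by_cases h : i = j <;> simp [h] <;> field_simp <;> ring
  rw [h1, Matrix.det_smul, (show ((1 : Matrix (Fin m) (Fin m) K) + Matrix.replicateCol (Fin 1) (a⁻¹ • u) * Matrix.replicateRow (Fin 1) v).det = 1 + v ⬝ᵥ (a⁻¹ • u) from Matrix.det_one_add_replicateCol_mul_replicateRow _ _), dotProduct_smul]
  have : a ^ Fintype.card (Fin m) = a ^ (m - 1) * a := by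
    rw [Fintype.card_fin, ← pow_succ]
    congr 1; omega
  rw [this]
  field_simp
  rw [smul_eq_mul, mul_add, mul_one, ← mul_assoc, mul_one_div_cancel ha, one_mul]

/-- The spectrum of a complex matrix is the root set of its characteristic polynomial. -/
lemma aux_spectrum_eq_charpoly_roots {m : ℕ} (A : Matrix (Fin m) (Fin m) ℂ) :
    spectrum ℂ A = {μ : ℂ | A.charpoly.IsRoot μ} := by
  ext μ
  rw [Set.mem_setOf_eq, spectrum.mem_iff, Matrix.isUnit_iff_isUnit_det]
  have hmap : (algebraMap ℂ (Matrix (Fin m) (Fin m) ℂ) μ - A)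
      = (evalRingHom μ).mapMatrix (charmatrix A) := by
    ext i j
    by_cases h : i = j
    · subst h; simp [Matrix.algebraMap_matrix_apply, charmatrix_apply_eq]
    · simp [Matrix.algebraMap_matrix_apply, charmatrix_apply_ne _ _ _ h, h]
  rw [hmap, ← RingHom.map_det (evalRingHom μ)]
  simp [Matrix.charpoly, IsRoot, isUnit_iff_ne_zero, not_not]

set_option maxHeartbeats 1000000 in
set_option synthInstance.maxHeartbeats 400000 in
/-- The `n × n` matrix `M` built from the blocks `(1)`, `-2·J`, `2·J`, `5·I + 2(J - I)`
has equitable quotient `Q = !![1, -2(n-1); 2, 2n+1]` for the partition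
`{{0},{1,…,n-1}}`, characteristic polynomial `(X - 3)^(n-1) (X - (2n-1))`, and its
spectrum coincides with that of `Q`, namely `{3, 2n-1}`. -/
theorem smallest_quotient_two_distinct_eigenvalues (n : ℕ) (hn : 2 ≤ n)
    (M : Matrix (Fin n) (Fin n) ℂ)
    (hM : ∀ i j : Fin n, M i j =
      if i.val = 0 then (if j.val = 0 then 1 else -2)
      else (if j.val = 0 then 2 else if i = j then 5 else 2))
    (P : Matrix (Fin n) (Fin 2) ℂ)
    (hP : ∀ i j, P i j =
      if (if i.val = 0 then (0 : ℕ) else 1) = j.val then 1 else 0)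
    (Q : Matrix (Fin 2) (Fin 2) ℂ)
    (hQ : Q = !![1, -2 * ((n : ℂ) - 1); 2, 2 * (n : ℂ) + 1]) :
    M * P = P * Q ∧
      M.charpoly = (X - C 3) ^ (n - 1) * (X - C (2 * (n : ℂ) - 1)) ∧
      spectrum ℂ M = spectrum ℂ Q ∧
      spectrum ℂ M = {3, 2 * (n : ℂ) - 1} := by
  haveI : NeZero n := ⟨by omega⟩
  have hval : ∀ k : Fin n, (k = 0) ↔ (k.val = 0) := by
    intro k; exact ⟨fun h => by simp [h], fun h => Fin.ext h⟩
  -- Part 1 : M * P = P * Q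
  have part1 : M * P = P * Q := by
    ext i j
    have hPQ : (P * Q) i j = Q (if i.val = 0 then 0 else 1) j := by
      rw [Matrix.mul_apply, Fin.sum_univ_two, hP, hP]
      by_cases h : i.val = 0 <;> simp [h]
    rw [Matrix.mul_apply, hPQ]
    rcases eq_or_ne j 0 with rfl | hj
    · have h0 : ∀ k : Fin n, M i k * P k 0 = if k = 0 then M i k else 0 := by
        intro k; rw [hP]
        by_cases h : k.val = 0 <;> simp [h, hval k]
      simp only [h0]
      rw [Finset.sum_ite_eq' Finset.univ (0 : Fin n) (fun k => M i k)]
      simp only [Finset.mem_univ, if_true, hM]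
      by_cases h : i.val = 0 <;> simp [h, hQ]
    · have hj1 : j = 1 := by
        have := j.isLt
        have : j.val ≠ 0 := fun h => hj (Fin.ext h)
        exact Fin.ext (by omega)
      subst hj1
      by_cases hi : i.val = 0
      · have h1 : ∀ k : Fin n, M i k * P k 1 = -2 + (if k = 0 then 2 else 0) := by
          intro k; rw [hP, hM]
          by_cases h : k.val = 0 <;> simp [h, hval k, hi]
        simp only [h1]
        rw [Finset.sum_add_distrib, Finset.sum_const,
          Finset.sum_ite_eq' Finset.univ (0 : Fin n) (fun _ => (2:ℂ))]
        simp [hi, hQ, Finset.card_univ]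
        ring
      · have h1 : ∀ k : Fin n, M i k * P k 1
            = 2 + ((if k = 0 then -2 else 0) + (if k = i then 3 else 0)) := by
          intro k; rw [hP, hM]
          rcases eq_or_ne k 0 with rfl | hk
          · have : (0 : Fin n) ≠ i := fun h => hi (by rw [← h]; rfl)
            simp [hi, this]
          · have hkv : k.val ≠ 0 := fun h => hk (Fin.ext h)
            rcases eq_or_ne k i with rfl | hki
            · simp [hi, hkv, hk]; norm_num
            · simp [hi, hkv, hk, hki, hki.symm]
        simp only [h1]
        rw [Finset.sum_add_distrib, Finset.sum_const, Finset.sum_add_distrib,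
          Finset.sum_ite_eq' Finset.univ (0 : Fin n) (fun _ => (-2:ℂ)),
          Finset.sum_ite_eq' Finset.univ i (fun _ => (3:ℂ))]
        simp [hi, hQ, Finset.card_univ]
        ring
  -- Part 2 : characteristic polynomial of M
  have part2 : M.charpoly = (X - C 3) ^ (n - 1) * (X - C (2 * (n : ℂ) - 1)) := by
    set w : Fin n → ℂ[X] := fun i => if i.val = 0 then C 2 else C (-2) with hw
    have hch : charmatrix M
        = (X - C 3 : ℂ[X]) • (1 : Matrix (Fin n) (Fin n) ℂ[X])
          + Matrix.replicateCol (Fin 1) w * Matrix.replicateRow (Fin 1) (fun _ => (1:ℂ[X])) := by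
      refine Matrix.ext fun i j => ?_
      rcases eq_or_ne i j with rfl | hij
      · rw [charmatrix_apply_eq, hM]
        by_cases h : i.val = 0 <;>
          simp only [h, if_true, if_false, Matrix.add_apply, Matrix.smul_apply,
            Matrix.one_apply_eq, Matrix.mul_apply, Fin.sum_univ_one, Matrix.replicateCol_apply,
            Matrix.replicateRow_apply, smul_eq_mul, mul_one, hw, if_pos rfl] <;>
          rw [sub_add, ← C_sub] <;> norm_num
      · rw [charmatrix_apply_ne _ _ _ hij, hM]
        have hvv : ¬ (i.val = 0 ∧ j.val = 0) := by
          rintro ⟨h1, h2⟩; exact hij (Fin.ext (h1.trans h2.symm))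
        simp only [Matrix.add_apply, Matrix.smul_apply, Matrix.one_apply_ne hij,
          Matrix.mul_apply, Fin.sum_univ_one, Matrix.replicateCol_apply, Matrix.replicateRow_apply,
          smul_eq_mul, mul_zero, mul_one, zero_add, hw]
        by_cases h : i.val = 0
        · have h' : ¬ j.val = 0 := fun hh => hvv ⟨h, hh⟩
          simp [h, h']
        · by_cases h' : j.val = 0 <;> simp [h, h', hij]
    set f := algebraMap ℂ[X] (RatFunc ℂ) with hf
    have hinj : Function.Injective f := RatFunc.algebraMap_injective ℂ
    apply hinj
    rw [Matrix.charpoly, RingHom.map_det, hch]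
    have hmap : (f.mapMatrix ((X - C 3 : ℂ[X]) • (1 : Matrix (Fin n) (Fin n) ℂ[X])
          + Matrix.replicateCol (Fin 1) w * Matrix.replicateRow (Fin 1) (fun _ => (1:ℂ[X]))))
        = f (X - C 3) • (1 : Matrix (Fin n) (Fin n) (RatFunc ℂ))
          + Matrix.replicateCol (Fin 1) (fun i => f (w i))
            * Matrix.replicateRow (Fin 1) (fun _ => (1:RatFunc ℂ)) := by
      refine Matrix.ext fun i j => ?_
      rcases eq_or_ne i j with rfl | hij
      · by_cases h : i.val = 0 <;> simp [h, hw, Matrix.mul_apply, Matrix.one_apply]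
      · by_cases h : i.val = 0 <;> simp [h, hw, hij, Matrix.mul_apply, Matrix.one_apply]
    have ha : f (X - C 3) ≠ 0 := by
      intro h
      have : (X - C 3 : ℂ[X]) = 0 := hinj (by simpa using h)
      exact X_sub_C_ne_zero 3 this
    rw [hmap, aux_det_rank_one (by omega) _ ha]
    have hdot : ((fun _ => (1 : RatFunc ℂ)) ⬝ᵥ fun i => f (w i)) = f (C (4 - 2 * (n:ℂ))) := by
      have hfw : ∀ i : Fin n, f (w i) = if i.val = 0 then f (C 2) else f (C (-2)) := by
        intro i; by_cases h : i.val = 0 <;> simp only [hw, h, if_true, if_false]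
      have h2 : ∀ i : Fin n, (if i.val = 0 then f (C 2) else f (C (-2)))
          = f (C (-2)) + (if i = (0 : Fin n) then f (C 4) else 0) := by
        intro i
        rcases eq_or_ne i 0 with rfl | hi
        · have h4 : (C (-2) + C 4 : ℂ[X]) = C 2 := by rw [← C_add]; norm_num
          rw [if_pos (by simp), if_pos rfl, ← map_add, h4]
        · have : i.val ≠ 0 := fun h => hi (Fin.ext h)
          simp [this, hi]
      simp only [dotProduct, one_mul, hfw, h2]
      rw [Finset.sum_add_distrib, Finset.sum_const,
        Finset.sum_ite_eq' Finset.univ (0 : Fin n) (fun _ => f (C 4))]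
      simp only [Finset.mem_univ, if_true, Finset.card_univ, Fintype.card_fin]
      rw [← map_nsmul, ← map_add]
      congr 1
      rw [nsmul_eq_mul, ← C_eq_natCast, ← C_mul, ← C_add]
      congr 1
      ring
    rw [hdot, ← map_pow, ← map_add f, ← _root_.map_mul f]
    congr 1
    congr 1
    rw [sub_add, ← C_sub]
    congr 2
    ring
  -- Part 4 : spectrum of M
  have hn1 : n - 1 ≠ 0 := by omega
  have specM : spectrum ℂ M = {3, 2 * (n : ℂ) - 1} := by
    rw [aux_spectrum_eq_charpoly_roots, part2]
    ext μ
    simp only [Set.mem_setOf_eq, IsRoot, eval_mul, eval_pow, eval_sub, eval_X, eval_C,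
      mul_eq_zero, pow_eq_zero_iff hn1, sub_eq_zero, Set.mem_insert_iff,
      Set.mem_singleton_iff]
  -- Part 3 : spectrum of Q
  have specQ : spectrum ℂ Q = {3, 2 * (n : ℂ) - 1} := by
    rw [aux_spectrum_eq_charpoly_roots]
    ext μ
    have hcpQ : Q.charpoly.eval μ = (μ - 3) * (μ - (2 * (n:ℂ) - 1)) := by
      rw [Matrix.charpoly, Matrix.det_fin_two,
        charmatrix_apply_eq, charmatrix_apply_eq,
        charmatrix_apply_ne _ _ _ (by decide : (0:Fin 2) ≠ 1),
        charmatrix_apply_ne _ _ _ (by decide : (1:Fin 2) ≠ 0), hQ]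
      simp
      ring
    simp only [Set.mem_setOf_eq, IsRoot, hcpQ, mul_eq_zero, sub_eq_zero,
      Set.mem_insert_iff, Set.mem_singleton_iff]
  exact ⟨part1, part2, by rw [specM, specQ], specM⟩
end

section
/- Let n ≥ 3 and let c11, c12, c21, c22, α be complex numbers. Let M be the n×n complex matrix given in block form by M = fromBlocks (the 1×1 matrix (c11)) ((c12/(n−1)) • (all-ones 1×(n−1) row)) (c21 • (all-ones (n−1)×1 column)) (α • I_{n−1} + ((c22−α)/(n−1)) • J_{n−1}), where I is the identity and J the all-ones matrix. Let P be the characteristic matrix of the partition {{0},{1,…,n−1}} and Q = !![c11, c12; c21, c22]. Then M * P = P * Q, and M.charpoly = (X − C α)^(n−2) * Q.charpoly. In particular, if Q.charpoly = (X − C α) * (X − C β) with α ≠ β, then M.charpoly = (X − C α)^(n−1) * (X − C β), so M has exactly two distinct eigenvalues α (of multiplicity n−1) and β (simple), and the equitable quotient matrix Q of order 2 contains both of them. -/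
open Polynomial Matrix

set_option maxHeartbeats 1000000
set_option synthInstance.maxHeartbeats 400000

lemma det_smul_one_add_smul_ones {K : Type*} [Field K] (m : ℕ) (hm : m ≠ 0) (a b : K)
    (ha : a ≠ 0) :
    (a • (1 : Matrix (Fin m) (Fin m) K) + b • Matrix.of (fun _ _ => (1 : K))).det
      = a ^ (m - 1) * (a + m * b) := by
  have h1 : (a • (1 : Matrix (Fin m) (Fin m) K) + b • Matrix.of (fun _ _ => (1 : K)))
      = a • (1 + replicateCol (Fin 1) (fun _ => b / a) * replicateRow (Fin 1) (fun _ => (1 : K))) := by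
    ext i j
    by_cases h : i = j <;>
      simp [Matrix.mul_apply, Matrix.one_apply, mul_add, smul_eq_mul, h] <;> field_simp
  rw [h1, det_smul]
  erw [det_one_add_replicateCol_mul_replicateRow (ι := Fin 1) (fun _ => b / a) (fun _ => (1 : K))]
  simp only [dotProduct, Fintype.card_fin, smul_eq_mul, Finset.sum_const,
    Finset.card_univ, nsmul_eq_mul, one_mul]
  have hms : m = (m - 1) + 1 := (Nat.succ_pred_eq_of_pos (Nat.pos_of_ne_zero hm)).symm
  rw [hms, pow_succ]
  field_simp
  simp only [Nat.add_sub_cancel]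
  ring

lemma aux_block_det {K : Type*} [Field K] (m : ℕ) (hm : m ≠ 0) (pa pr pb pc pγ : K)
    (hpa : pa ≠ 0) (hpr : pr ≠ 0) :
    (Matrix.fromBlocks (Matrix.of fun (_ : Fin 1) (_ : Fin 1) => pa)
      (Matrix.of fun (_ : Fin 1) (_ : Fin m) => pb)
      (Matrix.of fun (_ : Fin m) (_ : Fin 1) => pc)
      (pr • (1 : Matrix (Fin m) (Fin m) K) + pγ • Matrix.of fun _ _ => (1 : K))).det
      = pr ^ (m - 1) * (pa * pr + m * (pa * pγ - pc * pb)) := by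
  set A : Matrix (Fin 1) (Fin 1) K := Matrix.of fun _ _ => pa with hA
  haveI : Invertible A := by
    apply Matrix.invertibleOfIsUnitDet
    rw [Matrix.det_fin_one]
    exact hpa.isUnit
  have hinvA : (⅟A : Matrix (Fin 1) (Fin 1) K) = Matrix.of fun _ _ => pa⁻¹ := by
    apply invOf_eq_right_inv
    ext i j
    have hij : i = j := Subsingleton.elim _ _
    subst hij
    simp [Matrix.mul_apply, hA, Matrix.one_apply, mul_inv_cancel₀ hpa]
  rw [Matrix.det_fromBlocks₁₁]
  have hSchur : (pr • (1 : Matrix (Fin m) (Fin m) K) + pγ • Matrix.of fun _ _ => (1 : K))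
      - (Matrix.of fun (_ : Fin m) (_ : Fin 1) => pc) * ⅟A *
        (Matrix.of fun (_ : Fin 1) (_ : Fin m) => pb)
      = pr • (1 : Matrix (Fin m) (Fin m) K)
        + (pγ - pc * pa⁻¹ * pb) • Matrix.of fun _ _ => (1 : K) := by
    rw [hinvA]
    ext i j
    by_cases hij : i = j <;>
      simp [Matrix.mul_apply, Matrix.one_apply, hij] <;> ring
  rw [hSchur, det_smul_one_add_smul_ones m hm pr _ hpr, Matrix.det_fin_one]
  have hA00 : A 0 0 = pa := rfl
  rw [hA00]
  field_simp

/-- Theorem 3.4: the `n × n` block matrix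
`M = fromBlocks (c11) ((c12/(n-1)) J) (c21 J) (α I + ((c22-α)/(n-1)) J)` has
equitable quotient `Q = !![c11, c12; c21, c22]` for the partition `{{0},{1,…,n-1}}`
and `charpoly M = (X-α)^(n-2) · charpoly Q`; in particular if
`charpoly Q = (X-α)(X-β)` with `α ≠ β`, then `charpoly M = (X-α)^(n-1)(X-β)`,
so `M` has exactly the two distinct eigenvalues `α` (multiplicity `n-1`) and `β`. -/
theorem n_by_n_quotient_two_eigenvalues (n : ℕ) (hn : 3 ≤ n)
    (c11 c12 c21 c22 α : ℂ)
    (M : Matrix (Fin 1 ⊕ Fin (n - 1)) (Fin 1 ⊕ Fin (n - 1)) ℂ)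
    (hM : M = Matrix.fromBlocks
      (Matrix.of fun (_ : Fin 1) (_ : Fin 1) => c11)
      (Matrix.of fun (_ : Fin 1) (_ : Fin (n - 1)) => c12 / ((n : ℂ) - 1))
      (Matrix.of fun (_ : Fin (n - 1)) (_ : Fin 1) => c21)
      (α • (1 : Matrix (Fin (n - 1)) (Fin (n - 1)) ℂ) +
        ((c22 - α) / ((n : ℂ) - 1)) • Matrix.of fun _ _ => (1 : ℂ)))
    (P : Matrix (Fin 1 ⊕ Fin (n - 1)) (Fin 2) ℂ)
    (hP : ∀ i j, P i j =
      Sum.elim (fun _ => if j = 0 then (1 : ℂ) else 0)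
               (fun _ => if j = 1 then (1 : ℂ) else 0) i)
    (Q : Matrix (Fin 2) (Fin 2) ℂ)
    (hQ : Q = !![c11, c12; c21, c22]) :
    M * P = P * Q ∧
      M.charpoly = (X - C α) ^ (n - 2) * Q.charpoly ∧
      ∀ β : ℂ, α ≠ β → Q.charpoly = (X - C α) * (X - C β) →
        M.charpoly = (X - C α) ^ (n - 1) * (X - C β) := by
  have hcard : ((n - 1 : ℕ) : ℂ) = (n : ℂ) - 1 := by
    have h1 : (1:ℕ) ≤ n := by omega
    push_cast [Nat.cast_sub h1]
    ring
  have hk : ((n : ℂ) - 1) ≠ 0 := by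
    rw [← hcard]
    exact_mod_cast (by omega : n - 1 ≠ 0)
  have hm0 : n - 1 ≠ 0 := by omega
  -- Part 1 : M * P = P * Q
  have part1 : M * P = P * Q := by
    ext i j
    rcases i with i | i <;>
    · simp only [Matrix.mul_apply, hP, hM, Fintype.sum_sum_type, Fin.sum_univ_two,
        fromBlocks_apply₁₁, fromBlocks_apply₁₂, fromBlocks_apply₂₁, fromBlocks_apply₂₂,
        Matrix.of_apply, Sum.elim_inl, Sum.elim_inr, hQ, Matrix.add_apply,
        Matrix.smul_apply, Matrix.one_apply, smul_eq_mul, Finset.sum_ite_eq',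
        Finset.mem_univ, if_true, Fin.sum_univ_one, mul_ite, mul_one, mul_zero,
        Finset.sum_const, Finset.card_univ, Fintype.card_fin, nsmul_eq_mul]
      fin_cases j <;>
        simp [Matrix.cons_val_zero, Matrix.cons_val_one, hcard, ← Finset.sum_div,
          Finset.sum_add_distrib, Finset.sum_ite_eq, Finset.sum_ite_eq'] <;>
        field_simp <;> ring
  -- characteristic polynomial of Q
  have hQc : Q.charpoly = (X - C c11) * (X - C c22) - C c12 * C c21 := by
    rw [Matrix.charpoly, Matrix.det_fin_two]
    rw [charmatrix_apply_eq, charmatrix_apply_eq,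
      charmatrix_apply_ne _ _ _ (by decide), charmatrix_apply_ne _ _ _ (by decide), hQ]
    simp
  -- Part 2 : the characteristic polynomial of M
  have part2 : M.charpoly = (X - C α) ^ (n - 2) * Q.charpoly := by
    set γ : ℂ := (c22 - α) / ((n : ℂ) - 1) with hγdef
    have φinj : Function.Injective (algebraMap ℂ[X] (RatFunc ℂ)) :=
      IsFractionRing.injective ℂ[X] (RatFunc ℂ)
    set φ := (algebraMap ℂ[X] (RatFunc ℂ)) with hφdef
    have hpa : φ (X - C c11) ≠ 0 := by
      rw [map_ne_zero_iff φ φinj]; exact X_sub_C_ne_zero c11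
    have hpr : φ (X - C α) ≠ 0 := by
      rw [map_ne_zero_iff φ φinj]; exact X_sub_C_ne_zero α
    have hmap : (charmatrix M).map φ = Matrix.fromBlocks
        (Matrix.of fun (_ : Fin 1) (_ : Fin 1) => φ (X - C c11))
        (Matrix.of fun (_ : Fin 1) (_ : Fin (n-1)) => φ (-C (c12 / ((n : ℂ) - 1))))
        (Matrix.of fun (_ : Fin (n-1)) (_ : Fin 1) => φ (-C c21))
        (φ (X - C α) • (1 : Matrix (Fin (n-1)) (Fin (n-1)) (RatFunc ℂ)) +
          φ (-C γ) • Matrix.of fun _ _ => (1 : RatFunc ℂ)) := by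
      ext i j
      rcases i with i | i <;> rcases j with j | j
      · have hij : i = j := Subsingleton.elim _ _
        subst hij
        simp [charmatrix_apply_eq, hM]
      · simp [charmatrix_apply_ne _ _ _
          (by simp : (Sum.inl i : Fin 1 ⊕ Fin (n-1)) ≠ Sum.inr j), hM]
      · simp [charmatrix_apply_ne _ _ _
          (by simp : (Sum.inr i : Fin 1 ⊕ Fin (n-1)) ≠ Sum.inl j), hM]
      · by_cases hij : i = j
        · subst hij
          simp [charmatrix_apply_eq, hM, Matrix.one_apply]
          ring
        · simp [charmatrix_apply_ne _ _ _
            (by simp [hij] : (Sum.inr i : Fin 1 ⊕ Fin (n-1)) ≠ Sum.inr j),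
            hM, Matrix.one_apply, hij]
    have hφc : φ M.charpoly = ((charmatrix M).map φ).det := by
      rw [Matrix.charpoly, RingHom.map_det]
      rfl
    have hnk : ((n - 1 : ℕ) : RatFunc ℂ) = φ (C ((n : ℂ) - 1)) := by
      rw [← map_natCast φ (n-1), ← map_natCast (C : ℂ →+* ℂ[X]) (n-1), hcard]
    -- the scalar facts
    have h1 : (C ((n:ℂ)-1) : ℂ[X]) * C γ = C c22 - C α := by
      rw [← C_mul, ← C_sub]
      congr 1
      rw [hγdef]
      field_simp
    have h2 : (C ((n:ℂ)-1) : ℂ[X]) * C (c12 / ((n:ℂ)-1)) = C c12 := by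
      rw [← C_mul]
      congr 1
      field_simp
    -- the polynomial identity
    have hQT : Q.charpoly = (X - C c11) * (X - C α) +
        C ((n:ℂ)-1) * ((X - C c11) * (-C γ) - (-C c21) * (-C (c12 / ((n:ℂ)-1)))) := by
      rw [hQc]
      linear_combination (X - (C c11 : ℂ[X])) * h1 + C c21 * h2
    apply φinj
    rw [hφc, hmap,
      aux_block_det (n-1) hm0 (φ (X - C c11)) (φ (X - C α)) (φ (-C (c12 / ((n:ℂ)-1))))
        (φ (-C c21)) (φ (-C γ)) hpa hpr]
    rw [_root_.map_mul, map_pow, show n - 1 - 1 = n - 2 from by omega]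
    congr 1
    rw [hQT]
    simp only [_root_.map_add, _root_.map_mul, _root_.map_sub, hnk]
  refine ⟨part1, part2, ?_⟩
  intro β hαβ hQβ
  rw [part2, hQβ, show n - 1 = (n - 2) + 1 from by omega, pow_succ]
  ring
end

section
/- Let n ≥ 3, let c11, c12, c21, c22, α be complex numbers, and let M be an n×n complex matrix written in block form M = fromBlocks (the 1×1 matrix (m11)) (row vector r of length n−1) (column vector s of length n−1) (an (n−1)×(n−1) matrix B). Suppose the partition {{0},{1,…,n−1}} with characteristic matrix P is equitable for M with quotient Q = !![c11, c12; c21, c22] (i.e., M * P = P * Q), and suppose that for every vector y : Fin (n−1) → ℂ with ∑ j, y j = 0 the vector (0, y) is an eigenvector of M for the eigenvalue α, i.e., r ⬝ᵥ y = 0 and B *ᵥ y = α • y. Then necessarily r j = c12/(n−1) for every j, and B = α • I_{n−1} + ((c22−α)/(n−1)) • J_{n−1}, where I is the identity and J the all-ones matrix. -/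
open Matrix

/-- Uniqueness part of Theorem 3.4: if the partition `{{0},{1,…,n-1}}` is equitable
for `M = fromBlocks (m11) r s B` with quotient `Q = !![c11, c12; c21, c22]`, and
every sum-zero vector `y` yields an eigenvector `(0, y)` of `M` for `α`
(i.e. `r ⬝ᵥ y = 0` and `B *ᵥ y = α • y`), then `r` is the constant vector
`c12/(n-1)` and `B = α I + ((c22-α)/(n-1)) J`. -/
theorem n_by_n_two_eigenvalues_unique_form (n : ℕ) (hn : 3 ≤ n)
    (c11 c12 c21 c22 α m11 : ℂ)
    (r s : Fin (n - 1) → ℂ)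
    (B : Matrix (Fin (n - 1)) (Fin (n - 1)) ℂ)
    (M : Matrix (Fin 1 ⊕ Fin (n - 1)) (Fin 1 ⊕ Fin (n - 1)) ℂ)
    (hM : M = Matrix.fromBlocks
      (Matrix.of fun (_ : Fin 1) (_ : Fin 1) => m11)
      (Matrix.of fun (_ : Fin 1) j => r j)
      (Matrix.of fun i (_ : Fin 1) => s i) B)
    (P : Matrix (Fin 1 ⊕ Fin (n - 1)) (Fin 2) ℂ)
    (hP : ∀ i j, P i j =
      Sum.elim (fun _ => if j = 0 then (1 : ℂ) else 0)
               (fun _ => if j = 1 then (1 : ℂ) else 0) i)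
    (Q : Matrix (Fin 2) (Fin 2) ℂ)
    (hQ : Q = !![c11, c12; c21, c22])
    (hEquit : M * P = P * Q)
    (hEig : ∀ y : Fin (n - 1) → ℂ, (∑ j, y j) = 0 → r ⬝ᵥ y = 0 ∧ B *ᵥ y = α • y) :
    (∀ j, r j = c12 / ((n : ℂ) - 1)) ∧
      B = α • (1 : Matrix (Fin (n - 1)) (Fin (n - 1)) ℂ) +
        ((c22 - α) / ((n : ℂ) - 1)) • Matrix.of (fun _ _ => (1 : ℂ)) := by
  have h1n : 1 ≤ n := by omega
  have hcard : ((n - 1 : ℕ) : ℂ) = (n : ℂ) - 1 := by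
    push_cast [h1n]; ring
  have hne : (n : ℂ) - 1 ≠ 0 := by
    rw [sub_ne_zero]
    intro h
    have : n = 1 := by exact_mod_cast h
    omega
  haveI : Nontrivial (Fin (n - 1)) := by
    apply Fin.nontrivial_iff_two_le.mpr; omega
  -- row sums from equitability
  have hrsum : ∑ j, r j = c12 := by
    have h := congrFun (congrFun hEquit (Sum.inl 0)) 1
    simpa [hM, hP, hQ, Matrix.mul_apply, Fintype.sum_sum_type, Fin.sum_univ_two,
      Fin.isValue] using h
  have hBsum : ∀ i, ∑ j, B i j = c22 := by
    intro i
    have h := congrFun (congrFun hEquit (Sum.inr i)) 1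
    simpa [hM, hP, hQ, Matrix.mul_apply, Fintype.sum_sum_type, Fin.sum_univ_two,
      Fin.isValue] using h
  -- test vectors
  have hsum0 : ∀ j k : Fin (n - 1), j ≠ k →
      (∑ l, (Pi.single j 1 - Pi.single k 1 : Fin (n - 1) → ℂ) l) = 0 := by
    intro j k hjk
    simp [Finset.sum_sub_distrib]
  have hrconst : ∀ j k : Fin (n - 1), r j = r k := by
    intro j k
    rcases eq_or_ne j k with h | h
    · rw [h]
    · have hy := (hEig _ (hsum0 j k h)).1
      have h2 : r j - r k = 0 := by
        simpa [dotProduct_sub] using hy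
      exact sub_eq_zero.mp h2
  have hr : ∀ j, r j = c12 / ((n : ℂ) - 1) := by
    intro j
    have hs : ∑ k, r k = ((n - 1 : ℕ) : ℂ) * r j := by
      rw [Finset.sum_congr rfl fun k _ => hrconst k j]
      simp [Finset.sum_const, Finset.card_univ, mul_comm]
    rw [hrsum, hcard] at hs
    field_simp
    linear_combination -hs
  refine ⟨hr, ?_⟩
  -- difference of entries within a row
  have hB : ∀ i j k : Fin (n - 1), j ≠ k →
      B i j - B i k = α * ((if i = j then 1 else 0) - if i = k then 1 else 0) := by
    intro i j k hjk
    have hy := congrFun (hEig _ (hsum0 j k hjk)).2 i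
    simpa [Matrix.mulVec_sub, Matrix.mulVec_single, Pi.single_apply, eq_comm]
      using hy
  ext i j
  obtain ⟨j0, hj0⟩ := exists_ne i
  have hoff : ∀ l : Fin (n - 1), l ≠ i → B i l = B i j0 := by
    intro l hl
    rcases eq_or_ne l j0 with h | h
    · rw [h]
    · have := hB i l j0 h
      rw [if_neg (Ne.symm hl), if_neg (Ne.symm (Ne.symm hj0).symm)] at this
      · simpa [sub_eq_zero] using this
  have hdiag : B i i = B i j0 + α := by
    have := hB i i j0 (Ne.symm hj0)
    rw [if_pos rfl, if_neg (Ne.symm (Ne.symm hj0).symm)] at this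
    linear_combination this
  have hrow : ∑ l, B i l = B i i + ∑ l ∈ Finset.univ.erase i, B i l := by
    rw [Finset.add_sum_erase _ _ (Finset.mem_univ i)]
  have herase : ∑ l ∈ Finset.univ.erase i, B i l = ((n - 1 - 1 : ℕ) : ℂ) * B i j0 := by
    rw [Finset.sum_congr rfl fun l hl => hoff l (Finset.ne_of_mem_erase hl)]
    rw [Finset.sum_const, Finset.card_erase_of_mem (Finset.mem_univ i)]
    simp [Finset.card_univ, mul_comm]
  have hcard2 : ((n - 1 - 1 : ℕ) : ℂ) = (n : ℂ) - 2 := by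
    push_cast [show 1 ≤ n - 1 by omega, h1n]; ring
  have hkey : c22 = B i j0 + α + ((n : ℂ) - 2) * B i j0 := by
    rw [← hBsum i, hrow, herase, hcard2, hdiag]
  have hval : B i j0 = (c22 - α) / ((n : ℂ) - 1) := by
    field_simp
    linear_combination -hkey
  rcases eq_or_ne i j with h | h
  · subst h
    simp [Matrix.one_apply, hdiag, hval]
    ring
  · simp [Matrix.one_apply, h, hoff j (Ne.symm h), hval]
end

section
/- Let n and k be positive integers, let M be an n×n complex matrix, let f : Fin n → Fin k be a surjective map with characteristic matrix P defined by P i j = 1 if f i = j and 0 otherwise, and let Q be a k×k complex matrix with M * P = P * Q. Then for every λ ∈ ℂ: λ ∈ spectrum ℂ Q if and only if there exists a nonzero vector x : Fin n → ℂ lying in the column space of P (i.e., x = P *ᵥ y for some y : Fin k → ℂ) such that M *ᵥ x = λ • x. Equivalently, λ is an eigenvalue of the equitable quotient Q if and only if M has an eigenvector for λ whose entries are constant on each cell of the partition. -/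
open Matrix

lemma spectrum_iff_eig (k : ℕ) (Q : Matrix (Fin k) (Fin k) ℂ) (lam : ℂ) :
    lam ∈ spectrum ℂ Q ↔ ∃ y : Fin k → ℂ, y ≠ 0 ∧ Q *ᵥ y = lam • y := by
  rw [spectrum.mem_iff]
  have key : ∀ y : Fin k → ℂ,
      (algebraMap ℂ (Matrix (Fin k) (Fin k) ℂ) lam) *ᵥ y = lam • y := by
    intro y
    rw [Matrix.algebraMap_eq_diagonal]
    funext i
    simp [Matrix.mulVec_diagonal]
  constructor
  · intro h
    have hdet : (algebraMap ℂ (Matrix (Fin k) (Fin k) ℂ) lam - Q).det = 0 := by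
      by_contra hd
      exact h ((Matrix.isUnit_iff_isUnit_det _).2 (isUnit_iff_ne_zero.2 hd))
    obtain ⟨y, hy0, hy⟩ := (Matrix.exists_mulVec_eq_zero_iff).2 hdet
    refine ⟨y, hy0, ?_⟩
    rw [Matrix.sub_mulVec, key, sub_eq_zero] at hy
    exact hy.symm
  · rintro ⟨y, hy0, hy⟩ hU
    have hdet : (algebraMap ℂ (Matrix (Fin k) (Fin k) ℂ) lam - Q).det = 0 := by
      rw [← Matrix.exists_mulVec_eq_zero_iff]
      exact ⟨y, hy0, by rw [Matrix.sub_mulVec, key, hy, sub_self]⟩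
    rw [Matrix.isUnit_iff_isUnit_det, hdet] at hU
    exact not_isUnit_zero hU

/-- Theorem 4.2 (1): `λ` is an eigenvalue of the equitable quotient `Q` if and only
if `M` has a nonzero eigenvector for `λ` in the column space of the characteristic
matrix `P`, i.e. an eigenvector constant on each cell of the partition. -/
theorem quotient_eigenvalue_iff_eigenvector_in_columnSpace
    (n k : ℕ) (hn : 0 < n) (hk : 0 < k)
    (M : Matrix (Fin n) (Fin n) ℂ)
    (f : Fin n → Fin k) (hf : Function.Surjective f)
    (P : Matrix (Fin n) (Fin k) ℂ)
    (hP : ∀ i j, P i j = if f i = j then 1 else 0)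
    (Q : Matrix (Fin k) (Fin k) ℂ)
    (hQ : M * P = P * Q) (lam : ℂ) :
    lam ∈ spectrum ℂ Q ↔
      ∃ x : Fin n → ℂ, x ≠ 0 ∧ (∃ y : Fin k → ℂ, x = P *ᵥ y) ∧ M *ᵥ x = lam • x := by
  have hPv : ∀ (y : Fin k → ℂ) (i : Fin n), (P *ᵥ y) i = y (f i) := by
    intro y i
    simp only [Matrix.mulVec, dotProduct, hP]
    rw [Finset.sum_eq_single (f i)] <;> simp +contextual [eq_comm]
  have hPinj : ∀ y z : Fin k → ℂ, P *ᵥ y = P *ᵥ z → y = z := by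
    intro y z h
    funext j
    obtain ⟨i, rfl⟩ := hf j
    have := congrFun h i
    rwa [hPv, hPv] at this
  rw [spectrum_iff_eig]
  constructor
  · rintro ⟨y, hy0, hy⟩
    refine ⟨P *ᵥ y, ?_, ⟨y, rfl⟩, ?_⟩
    · intro h
      apply hy0
      funext j
      obtain ⟨i, rfl⟩ := hf j
      have := congrFun h i
      rwa [hPv] at this
    · rw [Matrix.mulVec_mulVec, hQ, ← Matrix.mulVec_mulVec, hy, Matrix.mulVec_smul]
  · rintro ⟨x, hx0, ⟨y, rfl⟩, hMx⟩
    refine ⟨y, fun h => hx0 (by simp [h]), ?_⟩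
    apply hPinj
    rw [Matrix.mulVec_mulVec, ← hQ, ← Matrix.mulVec_mulVec, hMx, Matrix.mulVec_smul]
end

section
/- Let M be a 4×4 complex matrix and λ₂ ∈ ℂ be such that the eigenspace {x : Fin 4 → ℂ | M *ᵥ x = λ₂ • x} has dimension 3 (i.e., the kernel of the linear map x ↦ M *ᵥ x − λ₂ • x has finrank 3). Let k ≥ 2, let f : Fin 4 → Fin k be a surjective map with characteristic matrix P defined by P i j = 1 if f i = j and 0 otherwise, and let Q be a k×k complex matrix with M * P = P * Q. Then λ₂ ∈ spectrum ℂ Q; that is, for any equitable partition with at least two cells, the eigenvalue of geometric multiplicity 3 automatically appears in the equitable quotient matrix. -/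
open Matrix

/-- Proposition 4.1 (3): if a `4 × 4` complex matrix `M` has an eigenvalue `λ₂`
whose eigenspace has dimension `3`, then `λ₂` appears in the spectrum of the
equitable quotient matrix `Q` of any equitable partition with at least two cells. -/
theorem eigenvalue_of_geometric_multiplicity_three_in_quotient
    (M : Matrix (Fin 4) (Fin 4) ℂ) (lam₂ : ℂ)
    (hdim : Module.finrank ℂ
      (LinearMap.ker (M.mulVecLin - lam₂ • LinearMap.id)) = 3)
    (k : ℕ) (hk : 2 ≤ k)
    (f : Fin 4 → Fin k) (hf : Function.Surjective f)
    (P : Matrix (Fin 4) (Fin k) ℂ)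
    (hP : ∀ i j, P i j = if f i = j then 1 else 0)
    (Q : Matrix (Fin k) (Fin k) ℂ)
    (hQ : M * P = P * Q) :
    lam₂ ∈ spectrum ℂ Q := by
  -- P.mulVecLin is injective
  have hPinj : Function.Injective P.mulVecLin := by
    rw [← LinearMap.ker_eq_bot, LinearMap.ker_eq_bot']
    intro y hy
    funext j
    obtain ⟨i, rfl⟩ := hf j
    have := congrFun hy i
    simp only [mulVecLin_apply, mulVec, dotProduct, hP] at this
    rw [Finset.sum_eq_single (f i)] at this
    · simpa using this
    · intro b _ hb; simp [Ne.symm hb]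
    · simp
  -- range of P.mulVecLin has finrank k
  have hrange : Module.finrank ℂ (LinearMap.range P.mulVecLin) = k := by
    rw [LinearMap.finrank_range_of_inj hPinj]
    simp
  set E := LinearMap.ker (M.mulVecLin - lam₂ • LinearMap.id) with hE
  set R := LinearMap.range P.mulVecLin with hR
  -- intersection is nontrivial
  have hsup : Module.finrank ℂ ↥(R ⊔ E) ≤ 4 := by
    have := Submodule.finrank_le (R ⊔ E)
    simpa using this
  have hinf : 1 ≤ Module.finrank ℂ ↥(R ⊓ E) := by
    have h := Submodule.finrank_sup_add_finrank_inf_eq R E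
    omega
  obtain ⟨x, hxmem, hxne⟩ : ∃ x : Fin 4 → ℂ, x ∈ R ⊓ E ∧ x ≠ 0 := by
    by_contra h
    push_neg at h
    have : R ⊓ E = ⊥ := by
      rw [Submodule.eq_bot_iff]
      intro x hx
      by_contra hne
      exact hne (h x hx)
    rw [this, finrank_bot] at hinf
    omega
  obtain ⟨hxR, hxE⟩ := hxmem
  obtain ⟨y, hy⟩ := hxR
  have hyne : y ≠ 0 := by
    rintro rfl
    simp at hy
    exact hxne hy.symm
  -- M *ᵥ x = lam₂ • x
  have hMx : M *ᵥ x = lam₂ • x := by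
    have h0 : (M.mulVecLin - lam₂ • (LinearMap.id : (Fin 4 → ℂ) →ₗ[ℂ] (Fin 4 → ℂ))) x = 0 := hxE
    rw [LinearMap.sub_apply, sub_eq_zero] at h0
    simpa using h0
  -- P (Q y) = P (lam₂ • y)
  have hQy : Q *ᵥ y = lam₂ • y := by
    apply hPinj
    have h1 : P.mulVecLin (Q *ᵥ y) = M *ᵥ (P *ᵥ y) := by
      simp only [mulVecLin_apply, mulVec_mulVec, hQ]
    have h2 : P *ᵥ y = x := hy
    rw [h1, h2, hMx, ← h2]
    simp [mulVec_smul]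
  -- conclude
  have : spectrum ℂ Q = spectrum ℂ (Matrix.toLin' Q) :=
    (AlgEquiv.spectrum_eq (Matrix.toLinAlgEquiv (Pi.basisFun ℂ (Fin k))) Q).symm
  rw [this, ← Module.End.hasEigenvalue_iff_mem_spectrum]
  exact Module.End.hasEigenvalue_of_hasEigenvector
    ⟨(Module.End.mem_eigenspace_iff).2 (by simpa using hQy), hyne⟩
end

section
/- Let a ≥ 2 and let w₁, w₂, w₃, w₄, w₅ be complex numbers (edge weights). Let M be the (a+4)×(a+4) symmetric complex matrix, indexed by u = 0, v = 1, w = 2, pendant vertices 3,…,a+2, and b = a+3, with M 0 1 = M 1 0 = w₁, M 0 2 = M 2 0 = w₂, M 0 j = M j 0 = w₃ for 3 ≤ j ≤ a+2, M 1 2 = M 2 1 = w₄, M 1 (a+3) = M (a+3) 1 = w₅, and all other entries 0 (this is the weighted adjacency matrix of the graph obtained from K₃ by attaching a pendant vertices at one vertex and one pendant vertex at another). Let P be the characteristic matrix of the partition {{0},{1},{2},{3,…,a+2},{a+3}} and let Q = !![0, w₁, w₂, a*w₃, 0; w₁, 0, w₄, 0, w₅; w₂, w₄, 0, 0, 0;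 w₃, 0, 0, 0, 0; 0, w₅, 0, 0, 0]. Then M * P = P * Q, M.charpoly = X^(a−1) * Q.charpoly, and spectrum ℂ M = spectrum ℂ Q; hence the equitable quotient matrix Q of order 5 contains all the distinct eigenvalues of the weighted adjacency matrix M. -/
open Polynomial Matrix Finset

def cell (a m : ℕ) : ℕ :=
  if m = 0 then 0 else if m = 1 then 1 else if m = 2 then 2 else if m ≤ a + 2 then 3 else 4

noncomputable def Bf (a : ℕ) (m k : ℕ) : ℂ :=
  if k < 5 then (if cell a m = k then 1 else 0)
  else if m + 1 = k then 1 else if m = 3 then -1 else 0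

noncomputable def Cf (a : ℕ) (m k : ℕ) : ℂ :=
  if k = 0 ∨ k = 1 ∨ k = 2 then (if m = k then 1 else 0)
  else if k = a + 3 then (if m = 4 then 1 else 0)
  else if m = 3 then (a : ℂ)⁻¹
  else if 5 ≤ m then (if m = k + 1 then 1 else 0) - (a : ℂ)⁻¹
  else 0

noncomputable def Qf (w₁ w₂ w₃ w₄ w₅ aC : ℂ) (s t : ℕ) : ℂ :=
  if s = 0 then (if t = 1 then w₁ else if t = 2 then w₂ else if t = 3 then aC * w₃ else 0)
  else if s = 1 then (if t = 0 then w₁ else if t = 2 then w₄ else if t = 4 then w₅ else 0)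
  else if s = 2 then (if t = 0 then w₂ else if t = 1 then w₄ else 0)
  else if s = 3 then (if t = 0 then w₃ else 0)
  else if s = 4 then (if t = 1 then w₅ else 0)
  else 0

noncomputable def Df (a : ℕ) (w₁ w₂ w₃ w₄ w₅ : ℂ) (s t : ℕ) : ℂ :=
  if s < 5 ∧ t < 5 then Qf w₁ w₂ w₃ w₄ w₅ (a : ℂ) s t else 0

noncomputable def Mf (a : ℕ) (w₁ w₂ w₃ w₄ w₅ : ℂ) (m k : ℕ) : ℂ :=
  if (m = 0 ∧ k = 1) ∨ (m = 1 ∧ k = 0) then w₁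
  else if (m = 0 ∧ k = 2) ∨ (m = 2 ∧ k = 0) then w₂
  else if (m = 0 ∧ 3 ≤ k ∧ k ≤ a + 2) ∨ (k = 0 ∧ 3 ≤ m ∧ m ≤ a + 2) then w₃
  else if (m = 1 ∧ k = 2) ∨ (m = 2 ∧ k = 1) then w₄
  else if (m = 1 ∧ k = a + 3) ∨ (k = 1 ∧ m = a + 3) then w₅
  else 0

lemma master (a : ℕ) (ha : 2 ≤ a) (F : ℕ → ℂ) (c d e : ℂ) (p q : ℕ)
    (h : ∀ m, 5 ≤ m → m ≤ a + 2 →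
      F m = c + (if m = p then d else 0) + (if m = q then e else 0)) :
    ∑ m ∈ range (a + 4), F m
      = F 0 + F 1 + F 2 + F 3 + F 4 + F (a + 3) + (a - 2 : ℕ) * c
        + (if 5 ≤ p ∧ p ≤ a + 2 then d else 0)
        + (if 5 ≤ q ∧ q ≤ a + 2 then e else 0) := by
  have h54 : 5 ≤ a + 4 := by omega
  rw [← Finset.sum_range_add_sum_Ico F h54]
  have h53 : 5 ≤ a + 3 := by omega
  have htop : ∑ m ∈ Ico 5 (a + 4), F m = (∑ m ∈ Ico 5 (a + 3), F m) + F (a + 3) :=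
    Finset.sum_Ico_succ_top h53 F
  have hmid : ∑ m ∈ Ico 5 (a + 3), F m
      = (a - 2 : ℕ) * c + (if 5 ≤ p ∧ p ≤ a + 2 then d else 0)
        + (if 5 ≤ q ∧ q ≤ a + 2 then e else 0) := by
    have hcg : ∀ m ∈ Ico 5 (a + 3), F m
        = c + (if m = p then d else 0) + (if m = q then e else 0) := by
      intro m hm
      rw [Finset.mem_Ico] at hm
      exact h m hm.1 (by omega)
    rw [Finset.sum_congr rfl hcg]
    rw [Finset.sum_add_distrib, Finset.sum_add_distrib, Finset.sum_const,
      Finset.sum_ite_eq' _ p (fun _ => d), Finset.sum_ite_eq' _ q (fun _ => e),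
      Nat.card_Ico]
    have hp : (p ∈ Ico 5 (a + 3)) ↔ (5 ≤ p ∧ p ≤ a + 2) := by
      rw [Finset.mem_Ico]; omega
    have hq : (q ∈ Ico 5 (a + 3)) ↔ (5 ≤ q ∧ q ≤ a + 2) := by
      rw [Finset.mem_Ico]; omega
    have hcard : a + 3 - 5 = a - 2 := by omega
    simp only [hp, hq, hcard, nsmul_eq_mul]
  rw [htop, hmid]
  simp only [Finset.sum_range_succ, Finset.sum_range_zero]
  ring
set_option maxHeartbeats 1600000

lemma L1 (a : ℕ) (ha : 2 ≤ a) (i j : Fin (a + 4)) :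
    ∑ k : Fin (a + 4), Bf a i.val k.val * Cf a k.val j.val
      = if i.val = j.val then 1 else 0 := by
  have ha0 : (a : ℂ) ≠ 0 := Nat.cast_ne_zero.mpr (by omega)
  have hiv := i.isLt
  have hjv := j.isLt
  rw [Fin.sum_univ_eq_sum_range (fun m => Bf a i.val m * Cf a m j.val) (a + 4)]
  rcases (by omega : j.val = 0 ∨ j.val = 1 ∨ j.val = 2 ∨ j.val = a + 3 ∨
      (3 ≤ j.val ∧ j.val ≤ a + 2)) with hj | hj | hj | hj | ⟨hj1, hj2⟩
  · rw [master a ha _ 0 0 0 0 0 (by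
      intro m hm1 hm2
      have g0 : m ≠ 0 := by omega
      norm_num [Cf, hj, g0])]
    norm_num [Bf, Cf, cell, hj]
    split_ifs
    all_goals first | (exfalso; omega) | ring1 | (exfalso; tauto)
  · rw [master a ha _ 0 0 0 0 0 (by
      intro m hm1 hm2
      have g0 : m ≠ 1 := by omega
      norm_num [Cf, hj, g0])]
    norm_num [Bf, Cf, cell, hj, -Fin.val_eq_zero_iff]
    split_ifs
    all_goals first | (exfalso; omega) | ring1 | (exfalso; tauto)
  · rw [master a ha _ 0 0 0 0 0 (by
      intro m hm1 hm2
      have g0 : m ≠ 2 := by omega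
      norm_num [Cf, hj, g0])]
    norm_num [Bf, Cf, cell, hj, -Fin.val_eq_zero_iff]
    split_ifs
    all_goals first | (exfalso; omega) | ring1 | (exfalso; tauto)
  · rw [master a ha _ 0 0 0 0 0 (by
      intro m hm1 hm2
      have g0 : m ≠ 4 := by omega
      have g1 : a + 3 ≠ 0 := by omega
      have g2 : a + 3 ≠ 1 := by omega
      have g3 : a + 3 ≠ 2 := by omega
      norm_num [Cf, hj, g0, g1, g2, g3])]
    have g1 : a + 3 ≠ 0 := by omega
    have g2 : a + 3 ≠ 1 := by omega
    have g3 : a + 3 ≠ 2 := by omega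
    have g4 : ¬(a + 3 < 5) := by omega
    have g5 : ¬(a + 3 ≤ a + 2) := by omega
    norm_num [Bf, Cf, cell, hj, g1, g2, g3, g4, g5, -Fin.val_eq_zero_iff]
    split_ifs
    all_goals first | (exfalso; omega) | ring1 | (exfalso; tauto)
  · -- middle columns
    have gj0 : j.val ≠ 0 := by omega
    have gj1 : j.val ≠ 1 := by omega
    have gj2 : j.val ≠ 2 := by omega
    have gj3 : j.val ≠ a + 3 := by omega
    rw [master a ha _ (if i.val = 3 then (a : ℂ)⁻¹ else 0)
      ((if i.val + 1 = j.val + 1 then 1 else 0) - (a : ℂ)⁻¹) (if i.val = 3 then -1 else 0)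
      (i.val + 1) (j.val + 1) (by
      intro m hm1 hm2
      have g4 : ¬(m < 5) := by omega
      have g5 : m ≠ 3 := by omega
      simp only [Bf, Cf, cell, gj0, gj1, gj2, gj3, g4, g5, hm1, if_false, if_true,
        or_self, if_neg, if_pos]
      norm_num [g4, g5, gj0, gj1, gj2, gj3, hm1]
      split_ifs <;> first | (exfalso; omega) | ring1 | (exfalso; tauto))]
    have g6 : ¬(a + 3 < 5) := by omega
    have g7 : ¬(a + 3 ≤ a + 2) := by omega
    rcases (by omega : i.val = 0 ∨ i.val = 1 ∨ i.val = 2 ∨ i.val = 3 ∨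
        (4 ≤ i.val ∧ i.val ≤ a + 2) ∨ i.val = a + 3) with hi | hi | hi | hi | ⟨hi1, hi2⟩ | hi
    · norm_num [Bf, Cf, cell, hi, gj0, gj1, gj2, gj3, g6, g7]
      omega
    · norm_num [Bf, Cf, cell, hi, gj0, gj1, gj2, gj3, g6, g7]
      omega
    · norm_num [Bf, Cf, cell, hi, gj0, gj1, gj2, gj3, g6, g7]
      split_ifs <;> first | (exfalso; omega) | ring1 | (exfalso; tauto) | (field_simp; ring1) | field_simp
    · norm_num [Bf, Cf, cell, hi, gj0, gj1, gj2, gj3, g6, g7]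
      push_cast [Nat.cast_sub (by omega : 2 ≤ a)]
      split_ifs <;> first | (exfalso; omega) | ring1 | (exfalso; tauto) | (field_simp; ring1) | field_simp
    · have f1 : i.val ≠ 0 := by omega
      have f2 : i.val ≠ 1 := by omega
      have f3 : i.val ≠ 2 := by omega
      have f4 : i.val ≠ 3 := by omega
      norm_num [Bf, Cf, cell, hi2, f1, f2, f3, f4, gj0, gj1, gj2, gj3, g6, g7]
      push_cast [Nat.cast_sub (by omega : 2 ≤ a)]
      split_ifs <;> first | (exfalso; omega) | ring1 | (exfalso; tauto) | (field_simp; ring1) | field_simp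
    · norm_num [Bf, Cf, cell, hi, gj0, gj1, gj2, gj3, g6, g7]
      push_cast [Nat.cast_sub (by omega : 2 ≤ a)]
      split_ifs <;> first | (exfalso; omega) | ring1 | (exfalso; tauto) | (field_simp; ring1) | field_simp

lemma L2 (a : ℕ) (ha : 2 ≤ a) (w₁ w₂ w₃ w₄ w₅ : ℂ) (i : Fin (a + 4)) (jv : ℕ)
    (hjv : jv < a + 4) :
    ∑ k : Fin (a + 4), Mf a w₁ w₂ w₃ w₄ w₅ i.val k.val * Bf a k.val jv
      = ∑ k : Fin (a + 4), Bf a i.val k.val * Df a w₁ w₂ w₃ w₄ w₅ k.val jv := by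
  have hiv := i.isLt
  rw [Fin.sum_univ_eq_sum_range (fun m => Mf a w₁ w₂ w₃ w₄ w₅ i.val m * Bf a m jv) (a + 4),
    Fin.sum_univ_eq_sum_range (fun m => Bf a i.val m * Df a w₁ w₂ w₃ w₄ w₅ m jv) (a + 4)]
  rw [master a ha (fun m => Bf a i.val m * Df a w₁ w₂ w₃ w₄ w₅ m jv) 0 0 0 0 0 (by
    intro m hm1 hm2
    have g : ¬(m < 5) := by omega
    norm_num [Df, g])]
  have gA : ¬(a + 3 < 5) := by omega
  have gB : a + 3 ≠ 0 := by omega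
  have gC : a + 3 ≠ 1 := by omega
  have gD : a + 3 ≠ 2 := by omega
  have gE : ¬(a + 3 ≤ a + 2) := by omega
  have gF : (3:ℕ) ≤ a + 2 := by omega
  have gG : (4:ℕ) ≤ a + 2 := by omega
  rcases (by omega : jv = 0 ∨ jv = 1 ∨ jv = 2 ∨ jv = 3 ∨ jv = 4 ∨ 5 ≤ jv)
    with hj | hj | hj | hj | hj | hj
  · rw [master a ha _ 0 0 0 0 0 (by
      intro m hm1 hm2
      have g1 : m ≠ 0 := by omega
      have g2 : m ≠ 1 := by omega
      have g3 : m ≠ 2 := by omega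
      norm_num [Mf, Bf, cell, hj, g1, g2, g3, hm2])]
    norm_num [Mf, Bf, Df, Qf, cell, hj, gA, gB, gC, gD, gE, gF, gG, -Fin.val_eq_zero_iff]
    all_goals try split_ifs
    all_goals first | (exfalso; omega) | ring1 | (exfalso; tauto) | norm_num
  · rw [master a ha _ 0 0 0 0 0 (by
      intro m hm1 hm2
      have g1 : m ≠ 0 := by omega
      have g2 : m ≠ 1 := by omega
      have g3 : m ≠ 2 := by omega
      norm_num [Mf, Bf, cell, hj, g1, g2, g3, hm2])]
    norm_num [Mf, Bf, Df, Qf, cell, hj, gA, gB, gC, gD, gE, gF, gG]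
    all_goals try split_ifs
    all_goals first | (exfalso; omega) | ring1 | (exfalso; tauto) | norm_num
  · rw [master a ha _ 0 0 0 0 0 (by
      intro m hm1 hm2
      have g1 : m ≠ 0 := by omega
      have g2 : m ≠ 1 := by omega
      have g3 : m ≠ 2 := by omega
      norm_num [Mf, Bf, cell, hj, g1, g2, g3, hm2])]
    norm_num [Mf, Bf, Df, Qf, cell, hj, gA, gB, gC, gD, gE, gF, gG]
    all_goals try split_ifs
    all_goals first | (exfalso; omega) | ring1 | (exfalso; tauto) | norm_num
  · rw [master a ha _ (if i.val = 0 then w₃ else 0) 0 0 0 0 (by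
      intro m hm1 hm2
      have g1 : m ≠ 0 := by omega
      have g2 : m ≠ 1 := by omega
      have g3 : m ≠ 2 := by omega
      have g4 : m ≠ a + 3 := by omega
      have g5 : (3:ℕ) ≤ m := by omega
      norm_num [Mf, Bf, cell, hj, g1, g2, g3, g4, g5, hm2]
      all_goals try split_ifs
      all_goals first | (exfalso; omega) | ring1 | (exfalso; tauto))]
    norm_num [Mf, Bf, Df, Qf, cell, hj, gA, gB, gC, gD, gE, gF, gG]
    all_goals push_cast [Nat.cast_sub (by omega : 2 ≤ a)]
    all_goals try split_ifs
    all_goals first | (exfalso; omega) | ring1 | (exfalso; tauto) | norm_num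
  · rw [master a ha _ 0 0 0 0 0 (by
      intro m hm1 hm2
      have g1 : m ≠ 0 := by omega
      have g2 : m ≠ 1 := by omega
      have g3 : m ≠ 2 := by omega
      norm_num [Mf, Bf, cell, hj, g1, g2, g3, hm2])]
    norm_num [Mf, Bf, Df, Qf, cell, hj, gA, gB, gC, gD, gE, gF, gG, -Fin.val_eq_zero_iff]
    all_goals try split_ifs
    all_goals first | (exfalso; omega) | ring1 | (exfalso; tauto) | norm_num
  · -- jv ≥ 5
    have gH : jv ≠ 4 := by omega
    have gI : jv ≠ a + 4 := by omega
    have gJ : ¬(jv < 5) := by omega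
    rw [master a ha _ 0 (Mf a w₁ w₂ w₃ w₄ w₅ i.val (jv - 1)) 0 (jv - 1) 0 (by
      intro m hm1 hm2
      have g4 : ¬(m < 5) := by omega
      have g5 : m ≠ 3 := by omega
      rcases eq_or_ne m (jv - 1) with h | h
      · rw [if_pos h]
        have h1 : m + 1 = jv := by omega
        rw [Bf, if_neg gJ, if_pos h1, h]
        norm_num
      · rw [if_neg h]
        have h1 : m + 1 ≠ jv := by omega
        rw [Bf, if_neg gJ, if_neg h1, if_neg g5]
        norm_num)]
    rcases (by omega : i.val = 0 ∨ i.val = 1 ∨ i.val = 2 ∨ i.val = 3 ∨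
        (4 ≤ i.val ∧ i.val ≤ a + 2) ∨ i.val = a + 3) with hi | hi | hi | hi | ⟨hi1, hi2⟩ | hi
    · norm_num [Mf, Bf, Df, Qf, cell, hi, gA, gB, gC, gD, gE, gF, gG, gH, gI, gJ]
      all_goals try split_ifs
      all_goals first | (exfalso; omega) | ring1 | (exfalso; tauto) | norm_num
    · norm_num [Mf, Bf, Df, Qf, cell, hi, gA, gB, gC, gD, gE, gF, gG, gH, gI, gJ]
      all_goals try split_ifs
      all_goals first | (exfalso; omega) | ring1 | (exfalso; tauto) | norm_num
    · norm_num [Mf, Bf, Df, Qf, cell, hi, gA, gB, gC, gD, gE, gF, gG, gH, gI, gJ]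
      all_goals try split_ifs
      all_goals first | (exfalso; omega) | ring1 | (exfalso; tauto) | norm_num
    · norm_num [Mf, Bf, Df, Qf, cell, hi, gA, gB, gC, gD, gE, gF, gG, gH, gI, gJ]
      all_goals try split_ifs
      all_goals first | (exfalso; omega) | ring1 | (exfalso; tauto) | norm_num
    · have f1 : i.val ≠ 0 := by omega
      have f2 : i.val ≠ 1 := by omega
      have f3 : i.val ≠ 2 := by omega
      have f4 : i.val ≠ a + 3 := by omega
      norm_num [Mf, Bf, Df, Qf, cell, hi2, f1, f2, f3, f4, gA, gB, gC, gD, gE, gF, gG, gH, gI, gJ]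
      all_goals try split_ifs
      all_goals first | (exfalso; omega) | ring1 | (exfalso; tauto) | norm_num
    · norm_num [Mf, Bf, Df, Qf, cell, hi, gA, gB, gC, gD, gE, gF, gG, gH, gI, gJ]
      all_goals try split_ifs
      all_goals first | (exfalso; omega) | ring1 | (exfalso; tauto) | norm_num


lemma L4 (a : ℕ) (ha : 2 ≤ a) (w₁ w₂ w₃ w₄ w₅ : ℂ) (i : Fin (a + 4)) (j : Fin 5) :
    ∑ k : Fin (a + 4), Bf a i.val k.val * Df a w₁ w₂ w₃ w₄ w₅ k.val j.val
      = ∑ t : Fin 5, Bf a i.val t.val * Qf w₁ w₂ w₃ w₄ w₅ (a : ℂ) t.val j.val := by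
  have hj := j.isLt
  rw [Fin.sum_univ_eq_sum_range (fun m => Bf a i.val m * Df a w₁ w₂ w₃ w₄ w₅ m j.val) (a + 4),
    master a ha _ 0 0 0 0 0 (by
      intro m hm1 hm2
      have g : ¬(m < 5) := by omega
      norm_num [Df, g]),
    Fin.sum_univ_five]
  have gA : ¬(a + 3 < 5) := by omega
  norm_num [Df, hj, gA, (show ((0 : Fin 5) : ℕ) = 0 from rfl), (show ((1 : Fin 5) : ℕ) = 1 from rfl),
    (show ((2 : Fin 5) : ℕ) = 2 from rfl), (show ((3 : Fin 5) : ℕ) = 3 from rfl),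
    (show ((4 : Fin 5) : ℕ) = 4 from rfl)]



lemma detQzero (a : ℕ) (w₁ w₂ w₃ w₄ w₅ : ℂ) :
    (!![0, w₁, w₂, (a : ℂ) * w₃, 0;
        w₁, 0, w₄, 0, w₅;
        w₂, w₄, 0, 0, 0;
        w₃, 0, 0, 0, 0;
        0, w₅, 0, 0, 0] : Matrix (Fin 5) (Fin 5) ℂ).det = 0 := by
  simp only [det_succ_row_zero, ← Nat.not_even_iff_odd, submatrix_apply, Fin.succ_zero_eq_one,
    submatrix_submatrix, det_unique, Fin.default_eq_zero, Function.comp_apply, Fin.succ_one_eq_two,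
    Fin.sum_univ_succ, Fin.val_zero, Fin.zero_succAbove, univ_unique, Fin.val_succ,
    Fin.val_eq_zero, Fin.succ_succAbove_zero, sum_singleton, Fin.succ_succAbove_one, Even.add_self,
    Matrix.cons_val', Matrix.cons_val_zero, Matrix.cons_val_one, Matrix.head_cons,
    Matrix.head_fin_const, Matrix.cons_val_fin_one, Matrix.empty_val']
  norm_num [Fin.succAbove, Fin.lt_def, Fin.castSucc, Fin.castAdd, Fin.castLE, Fin.succ]
  simp [Matrix.vecHead, Matrix.vecTail]

lemma charpoly_zero_fin (k : ℕ) : (0 : Matrix (Fin k) (Fin k) ℂ).charpoly = X ^ k := by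
  have h : charmatrix (0 : Matrix (Fin k) (Fin k) ℂ) = Matrix.diagonal (fun _ => (X : ℂ[X])) := by
    ext i j
    by_cases h : i = j <;> simp [h, charmatrix_apply, Matrix.diagonal_apply]
  rw [Matrix.charpoly, h, Matrix.det_diagonal]
  simp

lemma charpoly_conj_of_mul_eq_one {n R : Type*} [Fintype n] [DecidableEq n] [CommRing R]
    {B B' D : Matrix n n R} (h : B * B' = 1) :
    (B * D * B').charpoly = D.charpoly := by
  have hBc : B.map (C : R →+* R[X]) * B'.map (C : R →+* R[X]) = 1 := by
    rw [← Matrix.map_mul, h, Matrix.map_one _ (map_zero _) (map_one _)]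
  have key : charmatrix (B * D * B') =
      B.map (C : R →+* R[X]) * charmatrix D * B'.map (C : R →+* R[X]) := by
    rw [charmatrix, charmatrix]
    rw [Matrix.mul_sub, Matrix.sub_mul]
    congr 1
    · rw [scalar_apply, ← Matrix.smul_one_eq_diagonal, Matrix.mul_smul, Matrix.smul_mul,
        mul_one, hBc]
    · simp only [RingHom.mapMatrix_apply]
      rw [← Matrix.map_mul, ← Matrix.map_mul]
  rw [Matrix.charpoly, Matrix.charpoly, key, Matrix.det_mul, Matrix.det_mul]
  have : (B.map (C : R →+* R[X])).det * (B'.map (C : R →+* R[X])).det = 1 := by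
    rw [← Matrix.det_mul, hBc, Matrix.det_one]
  rw [mul_comm ((B.map (C : R →+* R[X])).det), mul_assoc, this, mul_one]

lemma eval_charpoly' {k : ℕ} (A : Matrix (Fin k) (Fin k) ℂ) (μ : ℂ) :
    A.charpoly.eval μ = (Matrix.diagonal (fun _ => μ) - A).det := by
  rw [Matrix.charpoly, ← Polynomial.coe_evalRingHom, RingHom.map_det]
  congr 1
  ext i j
  by_cases h : i = j <;> simp [h, charmatrix_apply, Matrix.diagonal_apply, Matrix.sub_apply]

lemma mem_spectrum_iff_root {k : ℕ} (A : Matrix (Fin k) (Fin k) ℂ) (μ : ℂ) :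
    μ ∈ spectrum ℂ A ↔ A.charpoly.IsRoot μ := by
  rw [spectrum.mem_iff, Matrix.isUnit_iff_isUnit_det, isUnit_iff_ne_zero, not_ne_iff,
    Polynomial.IsRoot.def, eval_charpoly']
  have : (algebraMap ℂ (Matrix (Fin k) (Fin k) ℂ)) μ - A = Matrix.diagonal (fun _ => μ) - A := by
    ext i j
    by_cases hij : i = j <;>
      simp [hij, Matrix.algebraMap_matrix_apply, Matrix.diagonal_apply, Matrix.sub_apply]
  rw [this]


/-- Proposition 5.1: for the weighted adjacency matrix `M` of the graph obtained
from `K₃` by attaching `a` pendant vertices at one vertex and one pendant vertex at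
another, the equitable quotient matrix `Q` of order 5 (for the partition
`{{u},{v},{w},{pendants},{b}}`) satisfies `charpoly M = X^(a-1) · charpoly Q` and
contains all the distinct eigenvalues of `M`. -/
theorem weighted_adjacency_quotient_contains_all (a : ℕ) (ha : 2 ≤ a)
    (w₁ w₂ w₃ w₄ w₅ : ℂ)
    (M : Matrix (Fin (a + 4)) (Fin (a + 4)) ℂ)
    (hM : ∀ i j : Fin (a + 4), M i j =
      if (i.val = 0 ∧ j.val = 1) ∨ (i.val = 1 ∧ j.val = 0) then w₁
      else if (i.val = 0 ∧ j.val = 2) ∨ (i.val = 2 ∧ j.val = 0) then w₂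
      else if (i.val = 0 ∧ 3 ≤ j.val ∧ j.val ≤ a + 2) ∨
              (j.val = 0 ∧ 3 ≤ i.val ∧ i.val ≤ a + 2) then w₃
      else if (i.val = 1 ∧ j.val = 2) ∨ (i.val = 2 ∧ j.val = 1) then w₄
      else if (i.val = 1 ∧ j.val = a + 3) ∨ (j.val = 1 ∧ i.val = a + 3) then w₅
      else 0)
    (P : Matrix (Fin (a + 4)) (Fin 5) ℂ)
    (hP : ∀ i j, P i j =
      if (if i.val = 0 then (0 : ℕ) else if i.val = 1 then 1 else if i.val = 2 then 2
          else if i.val ≤ a + 2 then 3 else 4) = j.val then 1 else 0)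
    (Q : Matrix (Fin 5) (Fin 5) ℂ)
    (hQ : Q = !![0, w₁, w₂, (a : ℂ) * w₃, 0;
                 w₁, 0, w₄, 0, w₅;
                 w₂, w₄, 0, 0, 0;
                 w₃, 0, 0, 0, 0;
                 0, w₅, 0, 0, 0]) :
    M * P = P * Q ∧
      M.charpoly = X ^ (a - 1) * Q.charpoly ∧
      spectrum ℂ M = spectrum ℂ Q := by
  have ha0 : (a : ℂ) ≠ 0 := Nat.cast_ne_zero.mpr (by omega)
  set Bm : Matrix (Fin (a + 4)) (Fin (a + 4)) ℂ :=
    Matrix.of (fun i j => Bf a i.val j.val) with hBm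
  set Cm : Matrix (Fin (a + 4)) (Fin (a + 4)) ℂ :=
    Matrix.of (fun i j => Cf a i.val j.val) with hCm
  set Dm : Matrix (Fin (a + 4)) (Fin (a + 4)) ℂ :=
    Matrix.of (fun i j => Df a w₁ w₂ w₃ w₄ w₅ i.val j.val) with hDm
  have hM' : ∀ i j, M i j = Mf a w₁ w₂ w₃ w₄ w₅ i.val j.val := fun i j => hM i j
  have hP' : ∀ (i : Fin (a + 4)) (j : Fin 5), P i j = Bf a i.val j.val := by
    intro i j
    rw [hP i j]
    simp only [Bf, cell, j.isLt, if_true]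
    rfl
  have hQ' : ∀ s t : Fin 5, Q s t = Qf w₁ w₂ w₃ w₄ w₅ (a : ℂ) s.val t.val := by
    intro s t
    fin_cases s <;> fin_cases t <;> simp [hQ, Qf, Matrix.vecHead, Matrix.vecTail]
  have hMB : M * Bm = Bm * Dm := by
    ext i j
    rw [Matrix.mul_apply, Matrix.mul_apply]
    rw [Finset.sum_congr rfl (fun k _ => by rw [hM' i k]; rfl :
      ∀ k ∈ Finset.univ, M i k * Bm k j
        = Mf a w₁ w₂ w₃ w₄ w₅ i.val k.val * Bf a k.val j.val)]
    exact L2 a ha w₁ w₂ w₃ w₄ w₅ i j.val j.isLt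
  have hBC : Bm * Cm = 1 := by
    ext i j
    rw [Matrix.mul_apply, Matrix.one_apply]
    have hs : ∑ k : Fin (a + 4), Bm i k * Cm k j
        = ∑ k : Fin (a + 4), Bf a i.val k.val * Cf a k.val j.val :=
      Finset.sum_congr rfl (fun k _ => rfl)
    rw [hs, L1 a ha i j]
    by_cases h : i = j
    · rw [if_pos h, if_pos (by rw [h])]
    · rw [if_neg (fun hh => h (Fin.ext hh)), if_neg h]
  have hMP : M * P = P * Q := by
    ext i j
    rw [Matrix.mul_apply, Matrix.mul_apply]
    calc ∑ k : Fin (a + 4), M i k * P k j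
        = ∑ k : Fin (a + 4), Mf a w₁ w₂ w₃ w₄ w₅ i.val k.val * Bf a k.val j.val :=
          Finset.sum_congr rfl (fun k _ => by rw [hM' i k, hP' k j])
      _ = ∑ k : Fin (a + 4), Bf a i.val k.val * Df a w₁ w₂ w₃ w₄ w₅ k.val j.val :=
          L2 a ha w₁ w₂ w₃ w₄ w₅ i j.val (by omega)
      _ = ∑ t : Fin 5, Bf a i.val t.val * Qf w₁ w₂ w₃ w₄ w₅ (a : ℂ) t.val j.val :=
          L4 a ha w₁ w₂ w₃ w₄ w₅ i j
      _ = ∑ t : Fin 5, P i t * Q t j :=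
          Finset.sum_congr rfl (fun t _ => by rw [hP' i t, hQ' t j])
  have hconj : M = Bm * Dm * Cm := by
    calc M = M * (Bm * Cm) := by rw [hBC, mul_one]
      _ = M * Bm * Cm := by rw [Matrix.mul_assoc]
      _ = Bm * Dm * Cm := by rw [hMB]
  have h54 : 5 + (a - 1) = a + 4 := by omega
  have hre : Matrix.reindex (finSumFinEquiv.trans (finCongr h54)).symm
      (finSumFinEquiv.trans (finCongr h54)).symm Dm
      = Matrix.fromBlocks Q 0 0 (0 : Matrix (Fin (a - 1)) (Fin (a - 1)) ℂ) := by
    ext x y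
    rcases x with s | s <;> rcases y with t | t <;>
      simp only [Matrix.reindex_apply, Matrix.submatrix_apply, Equiv.symm_symm,
        Equiv.trans_apply, finSumFinEquiv_apply_left, finSumFinEquiv_apply_right,
        finCongr_apply, Fin.coe_cast, Fin.coe_castAdd, Fin.coe_natAdd, hDm, Matrix.of_apply,
        Matrix.fromBlocks_apply₁₁, Matrix.fromBlocks_apply₁₂, Matrix.fromBlocks_apply₂₁,
        Matrix.fromBlocks_apply₂₂, Df, Matrix.zero_apply]
    · rw [if_pos ⟨s.isLt, t.isLt⟩, hQ' s t]
    · rw [if_neg (by omega)]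
    · rw [if_neg (by omega)]
    · rw [if_neg (by omega)]
  have hcpD : Dm.charpoly = Q.charpoly * X ^ (a - 1) := by
    rw [← Matrix.charpoly_reindex (finSumFinEquiv.trans (finCongr h54)).symm Dm, hre,
      Matrix.charpoly_fromBlocks_zero₁₂, charpoly_zero_fin]
  have hcpM : M.charpoly = X ^ (a - 1) * Q.charpoly := by
    rw [hconj, charpoly_conj_of_mul_eq_one hBC, hcpD, mul_comm]
  refine ⟨hMP, hcpM, ?_⟩
  have hdet : Q.det = 0 := by rw [hQ]; exact detQzero a w₁ w₂ w₃ w₄ w₅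
  have hQ0 : Q.charpoly.IsRoot 0 := by
    rw [Polynomial.IsRoot.def, eval_charpoly']
    rw [show Matrix.diagonal (fun _ : Fin 5 => (0 : ℂ)) - Q = -Q by
      rw [Matrix.diagonal_zero, zero_sub]]
    rw [Matrix.det_neg, hdet, mul_zero]
  ext μ
  rw [mem_spectrum_iff_root, mem_spectrum_iff_root, hcpM]
  constructor
  · intro h
    rw [Polynomial.IsRoot.def, Polynomial.eval_mul, Polynomial.eval_pow,
      Polynomial.eval_X] at h
    rcases mul_eq_zero.mp h with h | h
    · have hμ : μ = 0 := pow_eq_zero_iff (by omega : a - 1 ≠ 0) |>.mp h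
      rw [hμ]
      exact hQ0
    · exact h
  · intro h
    rw [Polynomial.IsRoot.def, Polynomial.eval_mul]
    rw [Polynomial.IsRoot.def] at h
    rw [h, mul_zero]
end

section
/- Let G be a simple graph on a finite vertex type V and let S be a finite set of vertices of G with |S| ≥ 2, such that the vertices of S are pairwise adjacent (S is a clique) and any two vertices of S have the same neighbors outside each other (for all u, v ∈ S, G.neighborSet u \ {v} = G.neighborSet v \ {u}). Then the eigenspace of the adjacency matrix G.adjMatrix ℝ for the eigenvalue −1, i.e., the kernel of the linear map x ↦ (G.adjMatrix ℝ + 1) *ᵥ x, has dimension at least |S| − 1. In particular −1 is an eigenvalue of the adjacency matrix of G with multiplicity at least |S| − 1. -/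
open Matrix

/-- Theorem 6.2 (2): if `S` is a clique of a graph `G` with `|S| ≥ 2` whose vertices
pairwise have the same neighbors outside each other, then the eigenspace of the
adjacency matrix for the eigenvalue `-1` (the kernel of `x ↦ (A + I) *ᵥ x`) has
dimension at least `|S| - 1`. -/
theorem adjMatrix_neg_one_eigenspace_of_clique_twins
    {V : Type*} [Fintype V] [DecidableEq V]
    (G : SimpleGraph V) [DecidableRel G.Adj]
    (S : Finset V) (hS : 2 ≤ S.card)
    (hClique : ∀ u ∈ S, ∀ v ∈ S, u ≠ v → G.Adj u v)
    (hNbr : ∀ u ∈ S, ∀ v ∈ S, G.neighborSet u \ {v} = G.neighborSet v \ {u}) :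
    S.card - 1 ≤ Module.finrank ℝ (LinearMap.ker (G.adjMatrix ℝ + 1).mulVecLin) := by
  classical
  obtain ⟨v₀, hv₀⟩ : ∃ v, v ∈ S := Finset.card_pos.mp (by omega)
  -- key: columns of A+I coincide on S
  have key : ∀ u ∈ S, ∀ w, (G.adjMatrix ℝ + 1) w u = (G.adjMatrix ℝ + 1) w v₀ := by
    intro u hu w
    by_cases huv : u = v₀
    · rw [huv]
    · have h := Set.ext_iff.mp (hNbr u hu v₀ hv₀) w
      simp only [Set.mem_diff, Set.mem_singleton_iff, SimpleGraph.mem_neighborSet] at h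
      by_cases hwu : w = u
      · subst hwu
        have hadj : G.Adj w v₀ := hClique w hu v₀ hv₀ huv
        simp [Matrix.add_apply, Matrix.one_apply, hadj, hadj.symm, huv, G.irrefl]
      · by_cases hwv : w = v₀
        · subst hwv
          have hadj : G.Adj w u := hClique w hv₀ u hu (Ne.symm huv)
          simp [Matrix.add_apply, Matrix.one_apply, hadj, hadj.symm, Ne.symm huv, G.irrefl]
        · have : G.Adj w u ↔ G.Adj w v₀ := by
            constructor
            · intro ha; exact ((h.mp ⟨ha.symm, hwv⟩).1).symm
            · intro ha; exact ((h.mpr ⟨ha.symm, hwu⟩).1).symm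
          simp [Matrix.add_apply, Matrix.one_apply, hwu, hwv]
          by_cases ha : G.Adj w u
          · rw [if_pos ha, if_pos (this.mp ha)]
          · rw [if_neg ha, if_neg (fun h' => ha (this.mpr h'))]
  have hker : ∀ u ∈ S,
      (Pi.single u 1 - Pi.single v₀ (1:ℝ)) ∈ LinearMap.ker (G.adjMatrix ℝ + 1).mulVecLin := by
    intro u hu
    rw [LinearMap.mem_ker]
    funext w
    simp only [mulVecLin_apply, mulVec, dotProduct, Pi.sub_apply, Pi.single_apply,
      Pi.zero_apply, mul_sub]
    rw [Finset.sum_sub_distrib]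
    simp only [mul_ite, mul_one, mul_zero, Finset.sum_ite_eq', Finset.mem_univ, if_true]
    rw [key u hu w, sub_self]
  -- linear independence
  set f : {x // x ∈ S.erase v₀} → (V → ℝ) :=
    fun u => Pi.single (u:V) 1 - Pi.single v₀ (1:ℝ) with hf
  have hli : LinearIndependent ℝ f := by
    rw [linearIndependent_iff']
    intro t g hsum i hi
    have h := congrFun hsum (i : V)
    have hiv : (i : V) ≠ v₀ := Finset.ne_of_mem_erase i.2
    have hinj : ∀ j ∈ t, j ≠ i → ((i : V) = (j : V) → False) := by
      intro j _ hji hij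
      exact hji (Subtype.ext hij).symm
    simp only [hf, Finset.sum_apply, Pi.smul_apply, Pi.sub_apply, Pi.single_apply,
      smul_eq_mul, Pi.zero_apply, if_neg hiv, sub_zero] at h
    rw [Finset.sum_eq_single i] at h
    · simpa using h
    · intro j hj hji
      simp [if_neg (hinj j hj hji), Ne.symm hji]
    · intro hit; exact absurd hi hit
  -- move into kernel
  set f' : {x // x ∈ S.erase v₀} → (LinearMap.ker (G.adjMatrix ℝ + 1).mulVecLin) :=
    fun u => ⟨f u, hker u (Finset.mem_of_mem_erase u.2)⟩ with hf'
  have hli' : LinearIndependent ℝ f' := by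
    apply LinearIndependent.of_comp (LinearMap.ker (G.adjMatrix ℝ + 1).mulVecLin).subtype
    exact hli
  have := hli'.fintype_card_le_finrank
  rwa [Fintype.card_coe, Finset.card_erase_of_mem hv₀] at this
end
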